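/- arXiv:1711.07029 — 3 statements merged into one kernel-verified Lean document; each statement's English description precedes it below -/
import Mathlib

section
/- For every integer n ≥ 3, there exists a universal cycle for the set of almost onto words of length n over Fin n, i.e., words w : Fin n → Fin n whose image has cardinality exactly n − 1 (exactly one letter of the alphabet is missing). -/
/- The finite set of words of length `k` over a finite alphabet `A`
satisfying a predicate `P`. -/
open Classical in
noncomputable def wordsOf {A : Type*} [Fintype A] {k : ℕ} (P : (Fin k → A) → Prop) :
    Finset (Fin k → A) :=
  Finset.univ.filter P

/-- A nonempty finite set `S` of words of length `k` over `A` admits a universal cycle: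
a function `c : ZMod S.card → A` such that `i ↦ (fun j => c (i + j))` is a bijection
from `ZMod S.card` onto `S`. -/
def HasUCycle {A : Type*} {k : ℕ} (S : Finset (Fin k → A)) : Prop :=
  ∃ c : ZMod S.card → A,
    Set.BijOn (fun i : ZMod S.card => fun j : Fin k => c (i + (j.val : ZMod S.card)))
      Set.univ ↑S

open Finset

set_option linter.unusedSectionVars false
set_option maxHeartbeats 1000000

section Euler
variable {V E : Type*} [DecidableEq V] [DecidableEq E] [Fintype E]
variable (src tgt : E → V)

def EStep (v v' : V) : Prop := ∃ e : E, src e = v ∧ tgt e = v'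

def Reaches : V → V → Prop := Relation.ReflTransGen (EStep src tgt)

lemma cnt_lemma (v : V) : ∀ (l : List E) (h : l ≠ []),
    l.Chain' (fun e f => tgt e = src f) →
    (l.countP (fun e => decide (src e = v)) : ℤ) - l.countP (fun e => decide (tgt e = v))
      = (if src (l.head h) = v then 1 else 0) - (if tgt (l.getLast h) = v then 1 else 0) := by
  intro l
  induction l with
  | nil => simp
  | cons e t ih =>
    intro _ hc
    cases t with
    | nil => simp [List.countP_cons]; split_ifs <;> simp_all
    | cons f t' =>
      replace hc := List.isChain_cons_cons.mp hc
      have hne : f :: t' ≠ [] := by simp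
      have H := ih hne hc.2
      simp only [List.countP_cons, List.getLast_cons hne, List.head_cons]
      have hhead : (f :: t').head hne = f := rfl
      rw [hhead] at H
      simp only [List.countP_cons] at H
      push_cast at H ⊢
      simp only [decide_eq_true_eq] at *
      have h4 : (if tgt e = v then (1:ℤ) else 0) = if src f = v then 1 else 0 := by
        rw [hc.1]
      by_cases h1 : src e = v <;> by_cases h2 : tgt ((f :: t').getLast hne) = v <;>
        simp only [h1, h2, if_true, if_false] at H h4 ⊢ <;> split_ifs at H h4 ⊢ <;> linarith [H, h4]

lemma countP_toFinset (l : List E) (hl : l.Nodup) (p : E → Prop) [DecidablePred p] :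
    l.countP (fun e => decide (p e)) = (l.toFinset.filter p).card := by
  rw [List.countP_eq_length_filter, ← List.toFinset_card_of_nodup (hl.filter _),
    List.toFinset_filter]
  congr 1
  simp

lemma exists_ext (R : Finset E)
    (hbal : ∀ v, (R.filter (fun e => src e = v)).card = (R.filter (fun e => tgt e = v)).card)
    (P : List E) (hP : P ≠ []) (hnd : P.Nodup) (hc : P.Chain' (fun e f => tgt e = src f))
    (hsub : ∀ e ∈ P, e ∈ R) (hncl : tgt (P.getLast hP) ≠ src (P.head hP)) :
    ∃ e ∈ R, e ∉ P ∧ src e = tgt (P.getLast hP) := by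
  set v := tgt (P.getLast hP) with hv
  have hcnt := cnt_lemma src tgt v P hP hc
  rw [if_pos rfl, if_neg (fun h => hncl h.symm)] at hcnt
  have hsubT : P.toFinset ⊆ R := by intro x hx; exact hsub x (List.mem_toFinset.mp hx)
  have e1 := countP_toFinset P hnd (fun e => src e = v)
  have e2 := countP_toFinset P hnd (fun e => tgt e = v)
  rw [e1, e2] at hcnt
  have hlt : (P.toFinset.filter (fun e => src e = v)).card
      < (R.filter (fun e => src e = v)).card := by
    have h2 : (P.toFinset.filter (fun e => tgt e = v)).card
        ≤ (R.filter (fun e => tgt e = v)).card :=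
      Finset.card_le_card (Finset.filter_subset_filter _ hsubT)
    have h3 := hbal v
    omega
  have hns : ¬ ((R.filter (fun e => src e = v)) ⊆ (P.toFinset.filter (fun e => src e = v))) :=
    fun h => absurd (Finset.card_le_card h) (by omega)
  obtain ⟨x, hxR, hxP⟩ := Finset.not_subset.mp hns
  rw [Finset.mem_filter] at hxR
  refine ⟨x, hxR.1, ?_, hxR.2⟩
  intro hmem
  exact hxP (Finset.mem_filter.mpr ⟨List.mem_toFinset.mpr hmem, hxR.2⟩)

lemma close_trail (R : Finset E)
    (hbal : ∀ v, (R.filter (fun e => src e = v)).card = (R.filter (fun e => tgt e = v)).card) :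
    ∀ (d : ℕ) (P : List E) (hP : P ≠ []), P.Nodup → P.Chain' (fun e f => tgt e = src f) →
      (∀ e ∈ P, e ∈ R) → R.card ≤ P.length + d →
      ∃ (Q : List E) (hQ : Q ≠ []), Q.Nodup ∧ Q.Chain' (fun e f => tgt e = src f) ∧
        (∀ e ∈ Q, e ∈ R) ∧ Q.head hQ = P.head hP ∧
        tgt (Q.getLast hQ) = src (Q.head hQ) ∧ P.length ≤ Q.length := by
  intro d
  induction d with
  | zero =>
    intro P hP hnd hc hsub hlen
    by_cases hcl : tgt (P.getLast hP) = src (P.head hP)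
    · exact ⟨P, hP, hnd, hc, hsub, rfl, hcl, le_refl _⟩
    · exfalso
      obtain ⟨e, heR, heP, -⟩ := exists_ext src tgt R hbal P hP hnd hc hsub hcl
      have h1 : P.toFinset.card < R.card := by
        apply Finset.card_lt_card
        constructor
        · intro x hx; exact hsub x (List.mem_toFinset.mp hx)
        · intro hRP
          exact heP (List.mem_toFinset.mp (hRP heR))
      rw [List.toFinset_card_of_nodup hnd] at h1
      omega
  | succ d ih =>
    intro P hP hnd hc hsub hlen
    by_cases hcl : tgt (P.getLast hP) = src (P.head hP)
    · exact ⟨P, hP, hnd, hc, hsub, rfl, hcl, le_refl _⟩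
    · obtain ⟨e, heR, heP, hesrc⟩ := exists_ext src tgt R hbal P hP hnd hc hsub hcl
      have hP' : P ++ [e] ≠ [] := by simp
      have hnd' : (P ++ [e]).Nodup := by
        rw [List.nodup_append]
        exact ⟨hnd, List.nodup_singleton e, by intro a ha b hb; simp at hb; subst hb; exact fun h => heP (h ▸ ha)⟩
      have hc' : (P ++ [e]).Chain' (fun e f => tgt e = src f) := by
        apply List.isChain_append.mpr
        refine ⟨hc, List.isChain_singleton e, ?_⟩
        intro x hx y hy
        rw [List.getLast?_eq_getLast hP] at hx
        simp at hx hy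
        rw [← hx, ← hy]
        exact hesrc.symm
      have hsub' : ∀ f ∈ P ++ [e], f ∈ R := by
        intro f hf
        rcases List.mem_append.mp hf with h | h
        · exact hsub f h
        · simp at h; rw [h]; exact heR
      have hlen' : R.card ≤ (P ++ [e]).length + d := by
        simp only [List.length_append, List.length_singleton]
        omega
      obtain ⟨Q, hQ, a1, a2, a3, a4, a5, a6⟩ := ih (P ++ [e]) hP' hnd' hc' hsub' hlen'
      refine ⟨Q, hQ, a1, a2, a3, ?_, a5, ?_⟩
      · rw [a4, List.head_append_of_ne_nil hP]
      · simp only [List.length_append, List.length_singleton] at a6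
        omega

end Euler

section Euler2
variable {V E : Type*} [DecidableEq V] [DecidableEq E] [Fintype E]
variable (src tgt : E → V)

def CChain (l : List E) : Prop :=
  l.Chain' (fun e f => tgt e = src f) ∧ ∀ h : l ≠ [], tgt (l.getLast h) = src (l.head h)

lemma cchain_rotate_one (l : List E) (h : CChain src tgt l) : CChain src tgt (l.rotate 1) := by
  cases l with
  | nil => simpa using h
  | cons e t =>
    rw [List.rotate_cons_succ, List.rotate_zero]
    cases t with
    | nil => simpa using h
    | cons f t' =>
      obtain ⟨hc, hcl⟩ := h
      have hne : f :: t' ≠ [] := by simp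
      constructor
      · apply List.isChain_append.mpr
        refine ⟨List.IsChain.tail hc, List.isChain_singleton e, ?_⟩
        intro x hx y hy
        rw [List.getLast?_eq_getLast hne] at hx
        simp at hx hy
        rw [← hx, ← hy]
        have := hcl (by simp)
        rwa [List.getLast_cons hne] at this
      · intro h'
        have h1 : ((f :: t') ++ [e]).getLast h' = e := by
          simp [List.getLast_append]
        have h2 : ((f :: t') ++ [e]).head h' = f := rfl
        rw [h1, h2]
        exact (List.isChain_cons_cons.mp hc).1

lemma cchain_rotate (l : List E) (h : CChain src tgt l) (n : ℕ) :
    CChain src tgt (l.rotate n) := by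
  induction n with
  | zero => simpa using h
  | succ n ih =>
    have : l.rotate (n + 1) = (l.rotate n).rotate 1 := by
      rw [List.rotate_rotate]
    rw [this]
    exact cchain_rotate_one src tgt _ ih

lemma find_adjacent (T : List E) (g : E) (hgT : g ∉ T)
    (v : V) (hr : Reaches src tgt v (src g)) :
    (∃ e ∈ T, tgt e = v) → ∃ h, h ∉ T ∧ ∃ e ∈ T, tgt e = src h := by
  induction hr using Relation.ReflTransGen.head_induction_on with
  | refl => exact fun hv => ⟨g, hgT, hv⟩
  | head h' hrest ih =>
    intro hv
    obtain ⟨e₁, he1, he2⟩ := h'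
    by_cases hmem : e₁ ∈ T
    · exact ih ⟨e₁, hmem, he2⟩
    · exact ⟨e₁, hmem, by rw [he1]; exact hv⟩

lemma euler_circuit [Nonempty E]
    (hbal : ∀ v, ((univ : Finset E).filter (fun e => src e = v)).card
      = ((univ : Finset E).filter (fun e => tgt e = v)).card)
    (hconn : ∀ e f : E, Reaches src tgt (tgt e) (src f)) :
    ∃ (l : List E) (hl : l ≠ []), l.Nodup ∧ l.Chain' (fun e f => tgt e = src f) ∧
      tgt (l.getLast hl) = src (l.head hl) ∧ ∀ e : E, e ∈ l := by
  classical
  set Φ : ℕ → Prop := fun d => ∃ (l : List E) (hl : l ≠ []), l.Nodup ∧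
    l.Chain' (fun e f => tgt e = src f) ∧
    tgt (l.getLast hl) = src (l.head hl) ∧ Fintype.card E ≤ l.length + d with hΦ
  have base : Φ (Fintype.card E) := by
    obtain ⟨e₀⟩ := ‹Nonempty E›
    have hbal' : ∀ v, ((univ : Finset E).filter (fun e => src e = v)).card
        = ((univ : Finset E).filter (fun e => tgt e = v)).card := hbal
    obtain ⟨Q, hQ, a1, a2, a3, a4, a5, a6⟩ := close_trail src tgt univ hbal'
      (Fintype.card E) [e₀] (by simp) (by simp) (List.isChain_singleton _) (by simp)
      (by simp [Finset.card_univ])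
    exact ⟨Q, hQ, a1, a2, a5, by simp at a6; omega⟩
  have step : ∀ d, Φ (d + 1) → Φ d := by
    intro d ⟨T, hT, hnd, hc, hcl, hlen⟩
    by_cases hdone : Fintype.card E ≤ T.length + d
    · exact ⟨T, hT, hnd, hc, hcl, hdone⟩
    push_neg at hdone
    -- there is an unused edge
    have hlenT : T.length < Fintype.card E := by omega
    have hssub : T.toFinset ⊂ univ := by
      rw [Finset.ssubset_univ_iff]
      intro hu
      rw [← List.toFinset_card_of_nodup hnd, hu, Finset.card_univ] at hlenT
      omega
    obtain ⟨g, -, hgT⟩ := Finset.exists_of_ssubset hssub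
    rw [List.mem_toFinset] at hgT
    -- find an unused edge adjacent to the trail
    obtain ⟨h, hhT, e', he'T, he'h⟩ := find_adjacent src tgt T g hgT
      (tgt (T.head hT)) (hconn _ g) ⟨T.head hT, List.head_mem hT, rfl⟩
    -- rotate T to end at e'
    obtain ⟨⟨i, hi⟩, hget⟩ := List.mem_iff_get.mp he'T
    set T₂ := T.rotate (i + 1) with hT₂
    have hlen₂ : T₂.length = T.length := List.length_rotate T (i+1)
    have hT₂ne : T₂ ≠ [] := by
      intro hh
      rw [hh] at hlen₂
      simp at hlen₂
      rw [← List.length_pos_iff] at hT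
      omega
    have hnd₂ : T₂.Nodup := List.nodup_rotate.mpr hnd
    have hmem₂ : ∀ x, x ∈ T₂ ↔ x ∈ T := fun x => List.mem_rotate
    obtain ⟨hc₂, hcl₂⟩ := cchain_rotate src tgt T ⟨hc, fun _ => hcl⟩ (i + 1)
    have hlast₂ : T₂.getLast hT₂ne = e' := by
      rw [List.getLast_eq_getElem, List.getElem_rotate]
      have : (T₂.length - 1 + (i + 1)) % T.length = i := by
        rw [hlen₂]
        have h1 : T.length - 1 + (i + 1) = T.length + i := by
          rw [← List.length_pos_iff] at hT
          omega
        rw [h1, Nat.add_mod_left, Nat.mod_eq_of_lt hi]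
      rw [← hget, List.get_eq_getElem]
      congr 1
    -- remaining edges
    set R : Finset E := univ \ T.toFinset with hR
    have hcnteq : ∀ p : E → Prop, ∀ inst : DecidablePred p,
        (R.filter p).card = (univ.filter p).card - (T.toFinset.filter p).card := by
      intro p inst
      have hsd : R.filter p = (univ.filter p) \ (T.toFinset.filter p) := by
        ext x
        simp [hR]
        tauto
      rw [hsd, Finset.card_sdiff_of_subset (Finset.filter_subset_filter _ (Finset.subset_univ _))]
    have hTbal : ∀ v, (T.toFinset.filter (fun e => src e = v)).card
        = (T.toFinset.filter (fun e => tgt e = v)).card := by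
      intro v
      have := cnt_lemma src tgt v T hT hc
      rw [hcl] at this
      rw [countP_toFinset _ hnd (fun e => src e = v),
        countP_toFinset _ hnd (fun e => tgt e = v)] at this
      omega
    have hRbal : ∀ v, (R.filter (fun e => src e = v)).card
        = (R.filter (fun e => tgt e = v)).card := by
      intro v
      rw [hcnteq _ _, hcnteq _ _, hbal v, hTbal v]
    -- close a trail from h
    have hhR : h ∈ R := by
      rw [hR, Finset.mem_sdiff]
      exact ⟨Finset.mem_univ _, fun hh => hhT (List.mem_toFinset.mp hh)⟩
    obtain ⟨Q, hQ, b1, b2, b3, b4, b5, b6⟩ := close_trail src tgt R hRbal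
      R.card [h] (by simp) (by simp) (List.isChain_singleton _) (by simpa using hhR) (by simp)
    have hheadQ : Q.head hQ = h := by simpa using b4
    -- combine
    refine ⟨T₂ ++ Q, by simp [hT₂ne], ?_, ?_, ?_, ?_⟩
    · rw [List.nodup_append]
      refine ⟨hnd₂, b1, ?_⟩
      intro x hx y hxQ hxy
      subst hxy
      have hxR := b3 x hxQ
      rw [hR, Finset.mem_sdiff, List.mem_toFinset] at hxR
      exact hxR.2 ((hmem₂ x).mp hx)
    · apply List.isChain_append.mpr
      refine ⟨hc₂, b2, ?_⟩
      intro x hx y hy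
      rw [List.getLast?_eq_getLast hT₂ne] at hx
      rw [List.head?_eq_head hQ] at hy
      simp at hx hy
      rw [← hx, ← hy, hlast₂, hheadQ]
      exact he'h
    · rw [List.getLast_append_of_ne_nil _ hQ, List.head_append_of_ne_nil hT₂ne]
      rw [b5, hheadQ, ← he'h, ← hlast₂]
      exact hcl₂ hT₂ne
    · rw [List.length_append, hlen₂]
      have : 1 ≤ Q.length := by
        have := b6
        simp at this
        omega
      omega
  have desc : ∀ j, Φ (Fintype.card E - j) := by
    intro j
    induction j with
    | zero => simpa using base
    | succ j ih =>
      by_cases hj : Fintype.card E ≤ j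
      · have h0 : Fintype.card E - (j+1) = Fintype.card E - j := by omega
        rwa [h0]
      · have h1 : Fintype.card E - j = (Fintype.card E - (j+1)) + 1 := by omega
        exact step _ (h1 ▸ ih)
  have final := desc (Fintype.card E)
  rw [Nat.sub_self] at final
  obtain ⟨T, hT, hnd, hc, hcl, hlen⟩ := final
  refine ⟨T, hT, hnd, hc, hcl, ?_⟩
  intro e
  have hcard : T.toFinset = univ := by
    apply Finset.eq_univ_of_card
    have h2 := Finset.card_le_univ T.toFinset
    rw [List.toFinset_card_of_nodup hnd] at h2 ⊢
    omega
  rw [← List.mem_toFinset, hcard]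
  exact Finset.mem_univ e

section Inst
open Fin
variable (M : ℕ)

abbrev Wd := Fin (M+3) → Fin (M+3)
abbrev Vtx := Fin (M+2) → Fin (M+3)

def Good (w : Wd M) : Prop := (Finset.univ.image w).card = M + 2

instance : DecidablePred (Good M) := fun w => by unfold Good; infer_instance

abbrev GE := {w : Wd M // Good M w}

def gsrc (e : GE M) : Vtx M := Fin.init e.1
def gtgt (e : GE M) : Vtx M := Fin.tail e.1

variable {M}

lemma snoc_at (v : Vtx M) (a : Fin (M+3)) (j : Fin (M+3)) :
    (Fin.snoc v a : Wd M) j = if h : j.val < M + 2 then v ⟨j.val, h⟩ else a := by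
  induction j using Fin.lastCases with
  | last => simp
  | cast i =>
    rw [Fin.snoc_castSucc]
    have h : (Fin.castSucc i).val < M + 2 := i.isLt
    rw [dif_pos h]
    congr

lemma snoc_succ (v : Vtx M) (a : Fin (M+3)) (i : Fin (M+2)) :
    (Fin.snoc v a : Wd M) i.succ = if h : i.val + 1 < M + 2 then v ⟨i.val + 1, h⟩ else a := by
  rw [snoc_at]
  simp only [Fin.val_succ]

lemma image_snoc (v : Vtx M) (a : Fin (M+3)) :
    Finset.univ.image (Fin.snoc v a : Wd M) = insert a (Finset.univ.image v) := by
  ext x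
  simp only [Finset.mem_image, Finset.mem_insert, Finset.mem_univ, true_and]
  constructor
  · rintro ⟨j, rfl⟩
    rw [snoc_at]
    split
    · exact Or.inr ⟨_, rfl⟩
    · exact Or.inl rfl
  · rintro (rfl | ⟨i, rfl⟩)
    · exact ⟨Fin.last (M+2), by simp⟩
    · exact ⟨i.castSucc, by rw [Fin.snoc_castSucc]⟩

lemma image_cons (v : Vtx M) (a : Fin (M+3)) :
    Finset.univ.image (Fin.cons a v : Wd M) = insert a (Finset.univ.image v) := by
  ext x
  simp only [Finset.mem_image, Finset.mem_insert, Finset.mem_univ, true_and]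
  constructor
  · rintro ⟨j, rfl⟩
    induction j using Fin.cases with
    | zero => exact Or.inl rfl
    | succ i => exact Or.inr ⟨i, rfl⟩
  · rintro (rfl | ⟨i, rfl⟩)
    · exact ⟨0, rfl⟩
    · exact ⟨i.succ, rfl⟩

lemma good_of_init (e : GE M) (v : Vtx M) (h : Fin.init e.1 = v) :
    Good M (Fin.cons (e.1 (Fin.last (M+2))) v : Wd M) := by
  have he : (Fin.snoc v (e.1 (Fin.last (M+2))) : Wd M) = e.1 := by
    rw [← h]; exact Fin.snoc_init_self e.1
  have h2 := e.2
  unfold Good at *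
  rw [image_cons, ← image_snoc, he]
  exact h2

lemma good_of_tail (e : GE M) (v : Vtx M) (h : Fin.tail e.1 = v) :
    Good M (Fin.snoc v (e.1 0) : Wd M) := by
  have he : (Fin.cons (e.1 0) v : Wd M) = e.1 := by
    rw [← h]; exact Fin.cons_self_tail e.1
  have h2 := e.2
  unfold Good at *
  rw [image_snoc, ← image_cons, he]
  exact h2

lemma balance (v : Vtx M) :
    ((Finset.univ : Finset (GE M)).filter (fun e => gsrc M e = v)).card
      = ((Finset.univ : Finset (GE M)).filter (fun e => gtgt M e = v)).card := by
  apply Finset.card_bij'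
    (i := fun (e : GE M) (he : e ∈ (Finset.univ : Finset (GE M)).filter (fun e => gsrc M e = v)) =>
      (⟨Fin.cons (e.1 (Fin.last (M+2))) v,
        good_of_init e v (Finset.mem_filter.mp he).2⟩ : GE M))
    (j := fun (e : GE M) (he : e ∈ (Finset.univ : Finset (GE M)).filter (fun e => gtgt M e = v)) =>
      (⟨Fin.snoc v (e.1 0), good_of_tail e v (Finset.mem_filter.mp he).2⟩ : GE M))
  · intro e he
    apply Subtype.ext
    show (Fin.snoc v ((Fin.cons (e.1 (Fin.last (M+2))) v : Wd M) 0) : Wd M) = e.1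
    rw [Fin.cons_zero]
    have h : Fin.init e.1 = v := (Finset.mem_filter.mp he).2
    rw [← h]
    exact Fin.snoc_init_self e.1
  · intro e he
    apply Subtype.ext
    show (Fin.cons ((Fin.snoc v (e.1 0) : Wd M) (Fin.last (M+2))) v : Wd M) = e.1
    rw [Fin.snoc_last]
    have h : Fin.tail e.1 = v := (Finset.mem_filter.mp he).2
    rw [← h]
    exact Fin.cons_self_tail e.1
  · intro e he
    rw [Finset.mem_filter]
    refine ⟨Finset.mem_univ _, ?_⟩
    show Fin.tail (Fin.cons (e.1 (Fin.last (M+2))) v : Wd M) = v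
    exact Fin.tail_cons _ _
  · intro e he
    rw [Finset.mem_filter]
    refine ⟨Finset.mem_univ _, ?_⟩
    show Fin.init (Fin.snoc v (e.1 0) : Wd M) = v
    exact Fin.init_snoc _ _

lemma card_image_le_v (v : Vtx M) : (Finset.univ.image v).card ≤ M + 2 :=
  Finset.card_image_le.trans (by simp)

lemma estep_snoc (v : Vtx M) (a : Fin (M+3)) (h : Good M (Fin.snoc v a)) :
    EStep (gsrc M) (gtgt M) v (Fin.tail (Fin.snoc v a : Wd M)) :=
  ⟨⟨Fin.snoc v a, h⟩, Fin.init_snoc _ _, rfl⟩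

lemma good_snoc_mem (v : Vtx M) (a : Fin (M+3)) (h1 : (Finset.univ.image v).card = M + 2)
    (h2 : a ∈ Finset.univ.image v) : Good M (Fin.snoc v a) := by
  unfold Good
  rw [image_snoc, Finset.insert_eq_self.mpr h2]
  exact h1

lemma good_snoc_not_mem (v : Vtx M) (a : Fin (M+3)) (h1 : (Finset.univ.image v).card = M + 1)
    (h2 : a ∉ Finset.univ.image v) : Good M (Fin.snoc v a) := by
  unfold Good
  rw [image_snoc, Finset.card_insert_of_notMem h2, h1]

lemma card_tail_ge (w : Wd M) :
    (Finset.univ.image w).card ≤ (Finset.univ.image (Fin.tail w)).card + 1 := by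
  have hsub : Finset.univ.image w ⊆ insert (w 0) (Finset.univ.image (Fin.tail w)) := by
    intro x hx
    obtain ⟨j, -, rfl⟩ := Finset.mem_image.mp hx
    induction j using Fin.cases with
    | zero => exact Finset.mem_insert_self _ _
    | succ i => exact Finset.mem_insert_of_mem (Finset.mem_image.mpr ⟨i, Finset.mem_univ _, rfl⟩)
  exact (Finset.card_le_card hsub).trans (Finset.card_insert_le _ _)

lemma card_init_ge (w : Wd M) :
    (Finset.univ.image w).card ≤ (Finset.univ.image (Fin.init w)).card + 1 := by
  have hsub : Finset.univ.image w
      ⊆ insert (w (Fin.last (M+2))) (Finset.univ.image (Fin.init w)) := by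
    intro x hx
    obtain ⟨j, -, rfl⟩ := Finset.mem_image.mp hx
    induction j using Fin.lastCases with
    | last => exact Finset.mem_insert_self _ _
    | cast i => exact Finset.mem_insert_of_mem (Finset.mem_image.mpr ⟨i, Finset.mem_univ _, rfl⟩)
  exact (Finset.card_le_card hsub).trans (Finset.card_insert_le _ _)

lemma reach_inj_aux : ∀ (d k : ℕ), k + d = M + 2 → ∀ v : Vtx M,
    M + 1 ≤ (Finset.univ.image v).card →
    (∀ i j : Fin (M+2), M + 2 - k ≤ i.val → M + 2 - k ≤ j.val → v i = v j → i = j) →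
    ∃ u : Vtx M, Function.Injective u ∧ Reaches (gsrc M) (gtgt M) v u := by
  intro d
  induction d with
  | zero =>
    intro k hk v hcard hinj
    exact ⟨v, fun i j hij => hinj i j (by omega) (by omega) hij, Relation.ReflTransGen.refl⟩
  | succ d ih =>
    intro k hk v hcard hinj
    have hkle : k ≤ M + 1 := by omega
    set F := (Finset.univ.filter (fun i : Fin (M+2) => M + 2 - k ≤ i.val)).image v with hF
    have hFsub : F ⊆ Finset.univ.image v :=
      Finset.image_subset_image (Finset.subset_univ _)
    have hfiltcard : (Finset.univ.filter (fun i : Fin (M+2) => M + 2 - k ≤ i.val)).card ≤ k := by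
      have hsub2 : (Finset.univ.filter (fun i : Fin (M+2) => M + 2 - k ≤ i.val))
          ⊆ (Finset.univ : Finset (Fin k)).image
            (fun j : Fin k => (⟨M + 2 - k + j.val, by omega⟩ : Fin (M+2))) := by
        intro i hi
        rw [Finset.mem_filter] at hi
        refine Finset.mem_image.mpr ⟨⟨i.val - (M + 2 - k), by have := i.isLt; omega⟩,
          Finset.mem_univ _, ?_⟩
        apply Fin.ext
        simp only
        have := i.isLt
        omega
      calc _ ≤ _ := Finset.card_le_card hsub2
        _ ≤ (Finset.univ : Finset (Fin k)).card := Finset.card_image_le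
        _ = k := by simp
    have hFcard : F.card ≤ k := Finset.card_image_le.trans hfiltcard
    have hex : ∃ a, Good M (Fin.snoc v a) ∧ a ∉ F := by
      by_cases hc2 : (Finset.univ.image v).card = M + 2
      · have hne : (Finset.univ.image v \ F).Nonempty := by
          rw [← Finset.card_pos, Finset.card_sdiff_of_subset hFsub, hc2]
          omega
        obtain ⟨a, ha⟩ := hne
        rw [Finset.mem_sdiff] at ha
        exact ⟨a, good_snoc_mem v a hc2 ha.1, ha.2⟩
      · have hc1 : (Finset.univ.image v).card = M + 1 := by
          have := card_image_le_v v
          omega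
        have hne : ((Finset.univ : Finset (Fin (M+3))) \ Finset.univ.image v).Nonempty := by
          rw [← Finset.card_pos, Finset.card_sdiff_of_subset (Finset.subset_univ _), hc1]
          simp
        obtain ⟨a, ha⟩ := hne
        rw [Finset.mem_sdiff] at ha
        exact ⟨a, good_snoc_not_mem v a hc1 ha.2, fun hmem => ha.2 (hFsub hmem)⟩
    obtain ⟨a, hg, haF⟩ := hex
    set v' := Fin.tail (Fin.snoc v a : Wd M) with hv'
    have hA : M + 1 ≤ (Finset.univ.image v').card := by
      have h1 := card_tail_ge (Fin.snoc v a : Wd M)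
      have h2 : (Finset.univ.image (Fin.snoc v a : Wd M)).card = M + 2 := hg
      rw [← hv'] at h1
      omega
    have hB : ∀ i j : Fin (M+2), M + 2 - (k+1) ≤ i.val → M + 2 - (k+1) ≤ j.val →
        v' i = v' j → i = j := by
      intro i j hi hj hij
      have hvi : v' i = (Fin.snoc v a : Wd M) i.succ := rfl
      have hvj : v' j = (Fin.snoc v a : Wd M) j.succ := rfl
      rw [hvi, hvj, snoc_succ, snoc_succ] at hij
      have hilt := i.isLt
      have hjlt := j.isLt
      by_cases h1 : i.val + 1 < M + 2 <;> by_cases h2 : j.val + 1 < M + 2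
      · rw [dif_pos h1, dif_pos h2] at hij
        have := hinj ⟨i.val+1, h1⟩ ⟨j.val+1, h2⟩ (by simp; omega) (by simp; omega) hij
        have := Fin.val_eq_val _ _ |>.mpr this
        simp at this
        exact Fin.ext (by omega)
      · rw [dif_pos h1, dif_neg h2] at hij
        exfalso
        apply haF
        rw [hF]
        refine Finset.mem_image.mpr ⟨⟨i.val+1, h1⟩, Finset.mem_filter.mpr
          ⟨Finset.mem_univ _, by simp; omega⟩, hij⟩
      · rw [dif_neg h1, dif_pos h2] at hij
        exfalso
        apply haF
        rw [hF]
        refine Finset.mem_image.mpr ⟨⟨j.val+1, h2⟩, Finset.mem_filter.mpr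
          ⟨Finset.mem_univ _, by simp; omega⟩, hij.symm⟩
      · exact Fin.ext (by omega)
    obtain ⟨u, hu, hr⟩ := ih (k+1) (by omega) v' hA hB
    exact ⟨u, hu, Relation.ReflTransGen.head (estep_snoc v a hg) hr⟩

lemma reach_inj (v : Vtx M) (h : M + 1 ≤ (Finset.univ.image v).card) :
    ∃ u : Vtx M, Function.Injective u ∧ Reaches (gsrc M) (gtgt M) v u := by
  refine reach_inj_aux (M+2) 0 (by omega) v h ?_
  intro i j hi
  exfalso
  have := i.isLt
  omega

def wrev (w : Wd M) : Wd M := fun j => w j.rev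

def vrev (v : Vtx M) : Vtx M := fun i => v i.rev

lemma image_wrev (w : Wd M) : Finset.univ.image (wrev w) = Finset.univ.image w := by
  ext x
  simp only [Finset.mem_image, Finset.mem_univ, true_and, wrev]
  constructor
  · rintro ⟨j, rfl⟩; exact ⟨j.rev, rfl⟩
  · rintro ⟨j, rfl⟩; exact ⟨j.rev, by rw [Fin.rev_rev]⟩

lemma image_vrev (v : Vtx M) : Finset.univ.image (vrev v) = Finset.univ.image v := by
  ext x
  simp only [Finset.mem_image, Finset.mem_univ, true_and, vrev]
  constructor
  · rintro ⟨j, rfl⟩; exact ⟨j.rev, rfl⟩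
  · rintro ⟨j, rfl⟩; exact ⟨j.rev, by rw [Fin.rev_rev]⟩

lemma good_wrev (w : Wd M) (h : Good M w) : Good M (wrev w) := by
  unfold Good at *
  rwa [image_wrev]

lemma init_wrev (w : Wd M) : Fin.init (wrev w) = vrev (Fin.tail w) := by
  funext i
  show wrev w i.castSucc = Fin.tail w i.rev
  show w i.castSucc.rev = w i.rev.succ
  rw [Fin.rev_castSucc]

lemma tail_wrev (w : Wd M) : Fin.tail (wrev w) = vrev (Fin.init w) := by
  funext i
  show w i.succ.rev = w i.rev.castSucc
  congr 1
  have h := Fin.rev_castSucc i.rev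
  rw [Fin.rev_rev] at h
  rw [← h, Fin.rev_rev]

lemma estep_rev {v v' : Vtx M} (h : EStep (gsrc M) (gtgt M) v v') :
    EStep (gsrc M) (gtgt M) (vrev v') (vrev v) := by
  obtain ⟨⟨w, hw⟩, h1, h2⟩ := h
  refine ⟨⟨wrev w, good_wrev w hw⟩, ?_, ?_⟩
  · show Fin.init (wrev w) = vrev v'
    rw [init_wrev]
    show vrev (gtgt M ⟨w, hw⟩) = vrev v'
    rw [h2]
  · show Fin.tail (wrev w) = vrev v
    rw [tail_wrev]
    show vrev (gsrc M ⟨w, hw⟩) = vrev v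
    rw [h1]

lemma reach_rev {v v' : Vtx M} (h : Reaches (gsrc M) (gtgt M) v v') :
    Reaches (gsrc M) (gtgt M) (vrev v') (vrev v) := by
  induction h with
  | refl => exact Relation.ReflTransGen.refl
  | tail hstep hlast ih => exact Relation.ReflTransGen.head (estep_rev hlast) ih

lemma vrev_vrev (v : Vtx M) : vrev (vrev v) = v := by
  funext i
  show v i.rev.rev = v i
  rw [Fin.rev_rev]

lemma inj_card (v : Vtx M) (hv : Function.Injective v) : (Finset.univ.image v).card = M + 2 := by
  rw [Finset.card_image_of_injective _ hv]
  simp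

noncomputable def miss (v : Vtx M) : Fin (M+3) :=
  if h : ((Finset.univ : Finset (Fin (M+3))) \ Finset.univ.image v).Nonempty then h.choose else 0

lemma miss_not_mem (v : Vtx M) (hv : Function.Injective v) :
    miss v ∉ Finset.univ.image v := by
  unfold miss
  have hne : ((Finset.univ : Finset (Fin (M+3))) \ Finset.univ.image v).Nonempty := by
    rw [← Finset.card_pos, Finset.card_sdiff_of_subset (Finset.subset_univ _), inj_card v hv]
    simp
  rw [dif_pos hne]
  have h := hne.choose_spec
  rw [Finset.mem_sdiff] at h
  exact h.2

lemma mem_univ_cases (v : Vtx M) (hv : Function.Injective v) (y : Fin (M+3)) :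
    y = miss v ∨ ∃ i, y = v i := by
  have hins : insert (miss v) (Finset.univ.image v) = Finset.univ := by
    apply Finset.eq_univ_of_card
    rw [Finset.card_insert_of_notMem (miss_not_mem v hv), inj_card v hv]
    simp
  have hy : y ∈ insert (miss v) (Finset.univ.image v) := by rw [hins]; exact Finset.mem_univ _
  rcases Finset.mem_insert.mp hy with h | h
  · exact Or.inl h
  · obtain ⟨i, -, hi⟩ := Finset.mem_image.mp h
    exact Or.inr ⟨i, hi.symm⟩

noncomputable def fullP (v : Vtx M) : Wd M := Fin.snoc v (miss v)

lemma fullP_app_lt (v : Vtx M) (j : Fin (M+3)) (h : j.val < M + 2) :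
    fullP v j = v ⟨j.val, h⟩ := by
  unfold fullP
  rw [snoc_at, dif_pos h]

lemma fullP_app_last (v : Vtx M) (j : Fin (M+3)) (h : j.val = M + 2) :
    fullP v j = miss v := by
  unfold fullP
  rw [snoc_at, dif_neg (by omega)]

lemma fullP_inj (v : Vtx M) (hv : Function.Injective v) : Function.Injective (fullP v) := by
  intro x y hxy
  by_cases hx : x.val < M + 2 <;> by_cases hy : y.val < M + 2
  · rw [fullP_app_lt v x hx, fullP_app_lt v y hy] at hxy
    have := hv hxy
    rw [Fin.mk.injEq] at this
    exact Fin.ext this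
  · rw [fullP_app_lt v x hx, fullP_app_last v y (by have := y.isLt; omega)] at hxy
    exact (miss_not_mem v hv (Finset.mem_image.mpr ⟨⟨x.val, hx⟩, Finset.mem_univ _, hxy⟩)).elim
  · rw [fullP_app_last v x (by have := x.isLt; omega), fullP_app_lt v y hy] at hxy
    exact (miss_not_mem v hv (Finset.mem_image.mpr ⟨⟨y.val, hy⟩, Finset.mem_univ _, hxy.symm⟩)).elim
  · have := x.isLt; have := y.isLt
    exact Fin.ext (by omega)

lemma init_fullP (v : Vtx M) : Fin.init (fullP v) = v := Fin.init_snoc _ _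

lemma init_inj {q : Wd M} (hq : Function.Injective q) : Function.Injective (Fin.init q) := by
  intro i j h
  have : q i.castSucc = q j.castSucc := h
  have := hq this
  exact Fin.castSucc_injective _ this

lemma fullP_of_inj (q : Wd M) (hq : Function.Injective q) : fullP (Fin.init q) = q := by
  have hiq : Function.Injective (Fin.init q) := init_inj hq
  have h2 : q (Fin.last (M+2)) ∉ Finset.univ.image (Fin.init q) := by
    intro hmem
    obtain ⟨i, -, hi⟩ := Finset.mem_image.mp hmem
    have : q i.castSucc = q (Fin.last (M+2)) := hi
    have heq := hq this
    have := i.isLt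
    have : i.castSucc.val = (Fin.last (M+2)).val := by rw [heq]
    simp at this
    omega
  have h3 : miss (Fin.init q) = q (Fin.last (M+2)) := by
    have hc : (((Finset.univ : Finset (Fin (M+3))) \ Finset.univ.image (Fin.init q))).card = 1 := by
      rw [Finset.card_sdiff_of_subset (Finset.subset_univ _), inj_card _ hiq]
      simp
    refine Finset.card_le_one.mp (le_of_eq hc) _ ?_ _ ?_ <;> rw [Finset.mem_sdiff]
    · exact ⟨Finset.mem_univ _, miss_not_mem _ hiq⟩
    · exact ⟨Finset.mem_univ _, h2⟩
  unfold fullP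
  rw [h3]
  exact Fin.snoc_init_self q

noncomputable def pEquiv (v : Vtx M) (hv : Function.Injective v) : Equiv.Perm (Fin (M+3)) :=
  Equiv.ofBijective (fullP v) (Finite.injective_iff_bijective.mp (fullP_inj v hv))

def Hprop (σ : Equiv.Perm (Fin (M+3))) : Prop :=
  ∀ v : Vtx M, Function.Injective v →
    Reaches (gsrc M) (gtgt M) v (Fin.init (fullP v ∘ ⇑σ))

lemma Hprop_one : Hprop (M := M) 1 := by
  intro v hv
  have h : Fin.init (fullP v ∘ ⇑(1 : Equiv.Perm (Fin (M+3)))) = v := by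
    rw [Equiv.Perm.coe_one, Function.comp_id]
    exact init_fullP v
  rw [h]
  exact Relation.ReflTransGen.refl

lemma Hprop_mul {a b : Equiv.Perm (Fin (M+3))} (ha : Hprop a) (hb : Hprop b) :
    Hprop (a * b) := by
  intro v hv
  have hinj1 : Function.Injective (fullP v ∘ ⇑a) := (fullP_inj v hv).comp a.injective
  set v₁ := Fin.init (fullP v ∘ ⇑a) with hv₁
  have hv₁inj : Function.Injective v₁ := init_inj hinj1
  have key : fullP v₁ = fullP v ∘ ⇑a := fullP_of_inj _ hinj1
  have r2 := hb v₁ hv₁inj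
  have heq : Fin.init (fullP v₁ ∘ ⇑b) = Fin.init (fullP v ∘ ⇑(a * b)) := by
    rw [key, Equiv.Perm.coe_mul, Function.comp_assoc]
  rw [heq] at r2
  exact (ha v hv).trans r2

lemma Hprop_pow {a : Equiv.Perm (Fin (M+3))} (ha : Hprop a) : ∀ k, Hprop (a ^ k) := by
  intro k
  induction k with
  | zero => rw [pow_zero]; exact Hprop_one
  | succ k ih => rw [pow_succ]; exact Hprop_mul ih ha

lemma Hprop_inv {a : Equiv.Perm (Fin (M+3))} (ha : Hprop a) : Hprop a⁻¹ := by
  have ho : 0 < orderOf a := orderOf_pos a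
  have h1 : a * a ^ (orderOf a - 1) = 1 := by
    rw [← pow_succ']
    have : orderOf a - 1 + 1 = orderOf a := by omega
    rw [this]
    exact pow_orderOf_eq_one a
  have h2 : a⁻¹ = a ^ (orderOf a - 1) := (eq_inv_of_mul_eq_one_right h1).symm
  rw [h2]
  exact Hprop_pow ha _

noncomputable def HH : Subgroup (Equiv.Perm (Fin (M+3))) where
  carrier := {σ | Hprop (M := M) σ}
  mul_mem' := fun ha hb => Hprop_mul ha hb
  one_mem' := Hprop_one
  inv_mem' := fun ha => Hprop_inv ha

def pt1 (M : ℕ) : Fin (M+3) := ⟨M+1, by omega⟩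
def pt2 (M : ℕ) : Fin (M+3) := ⟨M+2, by omega⟩

lemma Hprop_sr : Hprop (M := M) (finRotate (M+3) * Equiv.swap (pt1 M) (pt2 M)) := by
  intro v hv
  have hg : Good M (Fin.snoc v (v 0)) :=
    good_snoc_mem v (v 0) (inj_card v hv) (Finset.mem_image.mpr ⟨0, Finset.mem_univ _, rfl⟩)
  have heq : Fin.tail (Fin.snoc v (v 0) : Wd M)
      = Fin.init (fullP v ∘ ⇑(finRotate (M+3) * Equiv.swap (pt1 M) (pt2 M))) := by
    funext i
    show (Fin.snoc v (v 0) : Wd M) i.succ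
      = fullP v ((finRotate (M+3) * Equiv.swap (pt1 M) (pt2 M)) i.castSucc)
    rw [snoc_succ, Equiv.Perm.mul_apply]
    by_cases hi : i.val + 1 < M + 2
    · rw [dif_pos hi]
      have h1 : (Equiv.swap (pt1 M) (pt2 M)) i.castSucc = i.castSucc := by
        apply Equiv.swap_apply_of_ne_of_ne
        · exact Fin.ne_of_val_ne (by simp [pt1]; omega)
        · exact Fin.ne_of_val_ne (by simp [pt2]; omega)
      rw [h1]
      have hlt : i.castSucc < Fin.last (M+2) := by
        rw [Fin.lt_def]
        simp
      have h2 : (finRotate (M+3)) i.castSucc = i.castSucc + 1 := finRotate_succ_apply _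
      have h3 : (i.castSucc + 1).val = i.val + 1 := by
        rw [Fin.val_add_one_of_lt hlt, Fin.coe_castSucc]
      rw [h2]
      have h5 : fullP v (i.castSucc + 1) = v ⟨i.val + 1, hi⟩ := by
        rw [fullP_app_lt v _ (by rw [h3]; omega)]
        congr 1
        exact Fin.ext h3
      rw [h5]
    · rw [dif_neg hi]
      have hval : i.val = M + 1 := by have := i.isLt; omega
      have h1 : i.castSucc = pt1 M := Fin.ext (by simp [pt1, hval])
      rw [h1, Equiv.swap_apply_left]
      have h2 : (finRotate (M+3)) (pt2 M) = 0 := by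
        have hl : pt2 M = Fin.last (M+2) := Fin.ext (by simp [pt2])
        rw [finRotate_succ_apply, hl, Fin.last_add_one]
      rw [h2, fullP_app_lt v 0 (by simp)]
      congr 1
  have hstep := Relation.ReflTransGen.single (estep_snoc v (v 0) hg)
  rw [heq] at hstep
  exact hstep

lemma slide (Z : ℕ → Fin (M+3)) :
    ∀ L : ℕ, (∀ t, t < L → Good M (fun j : Fin (M+3) => Z (t + j.val))) →
    Reaches (gsrc M) (gtgt M) (fun i : Fin (M+2) => Z i.val)
      (fun i : Fin (M+2) => Z (L + i.val)) := by
  intro L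
  induction L with
  | zero =>
    intro _
    have he : (fun i : Fin (M+2) => Z (0 + i.val)) = fun i : Fin (M+2) => Z i.val := by
      funext i
      congr 1
      omega
    rw [he]
    exact Relation.ReflTransGen.refl
  | succ L ih =>
    intro hyp
    have hr := ih (fun t ht => hyp t (by omega))
    have hg : Good M (fun j : Fin (M+3) => Z (L + j.val)) := hyp L (by omega)
    refine Relation.ReflTransGen.tail hr ?_
    refine ⟨⟨fun j : Fin (M+3) => Z (L + j.val), hg⟩, ?_, ?_⟩
    · funext i
      show Z (L + i.castSucc.val) = Z (L + i.val)
      rfl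
    · funext i
      show Z (L + i.succ.val) = Z ((L + 1) + i.val)
      congr 1
      simp [Fin.val_succ]
      omega

lemma Hprop_rot : Hprop (M := M) (finRotate (M+3)) := by
  intro v hv
  set x := miss v with hx
  set Z : ℕ → Fin (M+3) := fun t =>
    if h : t < M + 2 then v ⟨t, h⟩
    else if t = M + 2 then v ⟨M+1, by omega⟩
    else if t = M + 3 ∨ t = 2*M + 5 then x
    else if h2 : t - (M+3) < M + 2 then v ⟨t - (M+3), h2⟩ else v 0
    with hZ
  have hZ1 : ∀ (t : ℕ) (h : t < M + 2), Z t = v ⟨t, h⟩ := by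
    intro t h
    rw [hZ]
    exact dif_pos h
  have hZ2 : Z (M+2) = v ⟨M+1, by omega⟩ := by
    simp only [hZ]
    split_ifs <;> first | rfl | (exfalso; omega) | (exfalso; push_neg at *; omega) | (exfalso; simp_all) | simp_all
  have hZ3 : Z (M+3) = x := by
    simp only [hZ]
    split_ifs <;> first | rfl | (exfalso; omega) | (exfalso; push_neg at *; omega) | (exfalso; simp_all) | simp_all
  have hZ5 : Z (2*M+5) = x := by
    simp only [hZ]
    split_ifs <;> first | rfl | (exfalso; omega) | (exfalso; push_neg at *; omega) | (exfalso; simp_all) | simp_all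
  have hZ4 : ∀ (t : ℕ) (h : t - (M+3) < M + 2), M+4 ≤ t → t ≠ 2*M+5 →
      Z t = v ⟨t - (M+3), h⟩ := by
    intro t h h1 h5
    simp only [hZ]
    rw [dif_neg (by omega), if_neg (by omega), if_neg (by omega), dif_pos h]
  have hgood : ∀ t, t < M + 4 → Good M (fun j : Fin (M+3) => Z (t + j.val)) := by
    intro t ht
    by_cases ht0 : t = 0
    · subst ht0
      have himg : Finset.univ.image (fun j : Fin (M+3) => Z (0 + j.val))
          = Finset.univ.image v := by
        ext y
        simp only [Finset.mem_image, Finset.mem_univ, true_and]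
        constructor
        · rintro ⟨j, rfl⟩
          have hj := j.isLt
          by_cases hjlt : 0 + j.val < M + 2
          · rw [hZ1 _ hjlt]
            exact ⟨_, rfl⟩
          · have he : 0 + j.val = M + 2 := by omega
            rw [he, hZ2]
            exact ⟨_, rfl⟩
        · rintro ⟨i, rfl⟩
          refine ⟨⟨i.val, by omega⟩, ?_⟩
          show Z (0 + i.val) = v i
          have he : 0 + i.val = i.val := by omega
          rw [he, hZ1 i.val i.isLt]
      unfold Good
      rw [himg]
      exact inj_card v hv
    · have ht1 : 1 ≤ t := by omega
      have himg : Finset.univ.image (fun j : Fin (M+3) => Z (t + j.val))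
          = Finset.univ \ {v 0} := by
        ext y
        simp only [Finset.mem_image, Finset.mem_univ, true_and, Finset.mem_sdiff,
          Finset.mem_singleton]
        constructor
        · rintro ⟨j, rfl⟩
          intro heq
          have hj := j.isLt
          by_cases c1 : t + j.val < M + 2
          · rw [hZ1 _ c1] at heq
            have := hv heq
            have : t + j.val = 0 := by
              have h0 : (⟨t + j.val, c1⟩ : Fin (M+2)).val = (0 : Fin (M+2)).val := by rw [this]
              simpa using h0
            omega
          · by_cases c2 : t + j.val = M + 2
            · rw [c2, hZ2] at heq
              have := hv heq
              have h0 : (⟨M+1, by omega⟩ : Fin (M+2)).val = (0 : Fin (M+2)).val := by rw [this]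
              simp at h0
            · by_cases c3 : t + j.val = M + 3 ∨ t + j.val = 2*M + 5
              · have : Z (t + j.val) = x := by
                  rcases c3 with h | h <;> rw [h]
                  · exact hZ3
                  · exact hZ5
                rw [this] at heq
                rw [hx] at heq
                exact miss_not_mem v hv (Finset.mem_image.mpr ⟨0, Finset.mem_univ _, heq.symm⟩)
              · push_neg at c3
                have hb : M + 4 ≤ t + j.val := by omega
                have hs : t + j.val - (M+3) < M + 2 := by omega
                rw [hZ4 _ hs hb c3.2] at heq
                have := hv heq
                have h0 : (⟨t + j.val - (M+3), hs⟩ : Fin (M+2)).val = (0 : Fin (M+2)).val := by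
                  rw [this]
                simp at h0
                omega
        · intro hy
          rcases mem_univ_cases v hv y with rfl | ⟨i, rfl⟩
          · refine ⟨⟨M+3-t, by omega⟩, ?_⟩
            show Z (t + (M+3-t)) = miss v
            have he : t + (M+3-t) = M+3 := by omega
            rw [he, hZ3]
          · have hi0 : i.val ≠ 0 := by
              intro h0
              apply hy
              have : i = 0 := Fin.ext h0
              rw [this]
            by_cases hti : t ≤ i.val
            · refine ⟨⟨i.val - t, by have := i.isLt; omega⟩, ?_⟩
              show Z (t + (i.val - t)) = v i
              have he : t + (i.val - t) = i.val := by omega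
              rw [he, hZ1 i.val i.isLt]
            · refine ⟨⟨M+3+i.val - t, by have := i.isLt; omega⟩, ?_⟩
              show Z (t + (M+3+i.val-t)) = v i
              have he : t + (M+3+i.val-t) = M+3+i.val := by omega
              rw [he]
              have hlt := i.isLt
              rw [hZ4 (M+3+i.val) (by omega) (by omega) (by omega)]
              congr 1
              exact Fin.ext (by simp)
      unfold Good
      rw [himg, Finset.card_sdiff_of_subset (Finset.singleton_subset_iff.mpr (Finset.mem_univ _)),
        Finset.card_singleton]
      simp
  have hslide := slide Z (M+4) hgood
  have hstart : (fun i : Fin (M+2) => Z i.val) = v := by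
    funext i
    rw [hZ1 i.val i.isLt]
  have hend : (fun i : Fin (M+2) => Z ((M+4) + i.val))
      = Fin.init (fullP v ∘ ⇑(finRotate (M+3))) := by
    funext i
    show Z (M+4+i.val) = fullP v ((finRotate (M+3)) i.castSucc)
    have h2 : (finRotate (M+3)) i.castSucc = i.castSucc + 1 := finRotate_succ_apply _
    rw [h2]
    by_cases hi : i.val + 1 < M + 2
    · rw [hZ4 (M+4+i.val) (by omega) (by omega) (by omega)]
      have hlt : i.castSucc < Fin.last (M+2) := by
        rw [Fin.lt_def]
        simp
      have h3 : (i.castSucc + 1).val = i.val + 1 := by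
        rw [Fin.val_add_one_of_lt hlt, Fin.coe_castSucc]
      have h5 : fullP v (i.castSucc + 1) = v ⟨i.val + 1, hi⟩ := by
        rw [fullP_app_lt v _ (by rw [h3]; omega)]
        congr 1
        exact Fin.ext h3
      rw [h5]
      congr 1
      apply Fin.ext
      show M+4+i.val-(M+3) = i.val+1
      omega
    · have hval : i.val = M+1 := by have := i.isLt; omega
      have he : M+4+i.val = 2*M+5 := by omega
      rw [he, hZ5]
      have hlt : i.castSucc < Fin.last (M+2) := by
        rw [Fin.lt_def]
        simp
      have h6 : i.castSucc + 1 = Fin.last (M+2) := by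
        apply Fin.ext
        rw [Fin.val_add_one_of_lt hlt, Fin.coe_castSucc]
        simp [hval]
      rw [h6, fullP_app_last v _ (by simp)]
  rw [hstart, hend] at hslide
  exact hslide

lemma Hprop_all (σ : Equiv.Perm (Fin (M+3))) : Hprop (M := M) σ := by
  have hρ : (finRotate (M+3)) ∈ HH (M := M) := Hprop_rot
  have hσr : (finRotate (M+3) * Equiv.swap (pt1 M) (pt2 M)) ∈ HH (M := M) := Hprop_sr
  have hτ : Equiv.swap (pt1 M) (pt2 M) ∈ HH (M := M) := by
    have h := (HH (M := M)).mul_mem ((HH (M := M)).inv_mem hρ) hσr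
    rwa [inv_mul_cancel_left] at h
  have hswap : Equiv.swap (pt1 M) ((finRotate (M+3)) (pt1 M)) = Equiv.swap (pt1 M) (pt2 M) := by
    congr 1
    rw [finRotate_succ_apply]
    apply Fin.ext
    rw [Fin.val_add_one_of_lt]
    · simp [pt1, pt2]
    · rw [Fin.lt_def]
      simp [pt1]
  have hc := Equiv.Perm.closure_cycle_adjacent_swap
    (σ := finRotate (M+3)) isCycle_finRotate support_finRotate (pt1 M)
  have hle : Subgroup.closure
      {finRotate (M+3), Equiv.swap (pt1 M) ((finRotate (M+3)) (pt1 M))} ≤ HH (M := M) := by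
    rw [Subgroup.closure_le]
    intro g hg
    simp only [Set.mem_insert_iff, Set.mem_singleton_iff] at hg
    rcases hg with rfl | rfl
    · exact hρ
    · rw [hswap]; exact hτ
  rw [hc] at hle
  exact hle (Subgroup.mem_top σ)

lemma reach_of_inj (u u' : Vtx M) (hu : Function.Injective u) (hu' : Function.Injective u') :
    Reaches (gsrc M) (gtgt M) u u' := by
  set σ : Equiv.Perm (Fin (M+3)) := (pEquiv u' hu').trans (pEquiv u hu).symm with hσ
  have h := Hprop_all σ u hu
  have heq : fullP u ∘ ⇑σ = fullP u' := by
    funext y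
    rw [hσ]
    show fullP u ((pEquiv u hu).symm ((pEquiv u' hu') y)) = fullP u' y
    have h1 : fullP u ((pEquiv u hu).symm ((pEquiv u' hu') y)) = (pEquiv u' hu') y :=
      (pEquiv u hu).apply_symm_apply _
    rw [h1]
    rfl
  rw [heq, init_fullP] at h
  exact h

lemma connectivity (e f : GE M) : Reaches (gsrc M) (gtgt M) (gtgt M e) (gsrc M f) := by
  have hge : (Finset.univ.image e.1).card = M + 2 := e.2
  have h1 : M + 1 ≤ (Finset.univ.image (gtgt M e)).card := by
    have h := card_tail_ge e.1
    show M + 1 ≤ (Finset.univ.image (Fin.tail e.1)).card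
    omega
  obtain ⟨u, hu, hru⟩ := reach_inj _ h1
  have hgf : (Finset.univ.image f.1).card = M + 2 := f.2
  have h2 : M + 1 ≤ (Finset.univ.image (vrev (gsrc M f))).card := by
    rw [image_vrev]
    have h := card_init_ge f.1
    show M + 1 ≤ (Finset.univ.image (Fin.init f.1)).card
    omega
  obtain ⟨u', hu', hru'⟩ := reach_inj _ h2
  have hrev : Reaches (gsrc M) (gtgt M) (vrev u') (gsrc M f) := by
    have h := reach_rev hru'
    rwa [vrev_vrev] at h
  have hu'r : Function.Injective (vrev u') := by
    intro i j hij
    have h := hu' hij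
    exact Fin.rev_injective h
  exact hru.trans ((reach_of_inj u (vrev u') hu hu'r).trans hrev)

lemma ge_nonempty : Nonempty (GE M) := by
  set v0 : Vtx M := fun i => ⟨i.val, by omega⟩ with hv0
  have hinj : Function.Injective v0 := by
    intro i j h
    apply Fin.ext
    have h2 : (v0 i).val = (v0 j).val := by rw [h]
    simpa [hv0] using h2
  exact ⟨⟨Fin.snoc v0 (v0 0), good_snoc_mem v0 (v0 0) (inj_card v0 hinj)
    (Finset.mem_image.mpr ⟨0, Finset.mem_univ _, rfl⟩)⟩⟩

end Inst

/-- For `n ≥ 3`, a U-cycle of almost onto words of length `n` over `Fin n`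
(words whose image has exactly `n - 1` elements, i.e. exactly one letter missing)
exists. -/
theorem ucycle_almost_onto_words (n : ℕ) (hn : 3 ≤ n) :
    HasUCycle (wordsOf (fun w : Fin n → Fin n =>
      (Finset.univ.image w).card = n - 1)) := by
  obtain ⟨M, rfl⟩ : ∃ M, n = M + 3 := ⟨n - 3, by omega⟩
  classical
  set S := wordsOf (fun w : Fin (M+3) → Fin (M+3) =>
    (Finset.univ.image w).card = M + 3 - 1) with hS
  have hmem : ∀ w : Wd M, w ∈ S ↔ Good M w := by
    intro w
    simp only [hS, wordsOf, Finset.mem_filter, Finset.mem_univ, true_and]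
    unfold Good
    constructor <;> intro h <;> omega
  haveI : Nonempty (GE M) := ge_nonempty
  obtain ⟨es, hne, hnd, hchain, hclosed, hall⟩ :=
    euler_circuit (gsrc M) (gtgt M) balance connectivity
  have hSeq : Finset.univ.filter (Good M) = S := by
    ext w
    rw [Finset.mem_filter, hmem w]
    exact ⟨fun h => h.2, fun h => ⟨Finset.mem_univ _, h⟩⟩
  have hlp : 0 < es.length := List.length_pos_iff.mpr hne
  have hlen : es.length = S.card := by
    have h1 : es.toFinset = Finset.univ :=
      Finset.eq_univ_iff_forall.mpr (fun e => List.mem_toFinset.mpr (hall e))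
    have h2 : es.length = Fintype.card (GE M) := by
      rw [← List.toFinset_card_of_nodup hnd, h1, Finset.card_univ]
    rw [h2, Fintype.card_subtype, hSeq]
  have hm0 : 0 < S.card := by omega
  haveI : NeZero S.card := ⟨by omega⟩
  set G : ℕ → Wd M := fun q => (es.get ⟨q % es.length, Nat.mod_lt _ hlp⟩).1 with hG
  have hadj : ∀ (q : ℕ) (hq : q < es.length),
      gtgt M (es.get ⟨q, hq⟩)
        = gsrc M (es.get ⟨(q+1) % es.length, Nat.mod_lt _ hlp⟩) := by
    intro q hq
    by_cases hq1 : q + 1 < es.length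
    · have hidx : (⟨(q+1) % es.length, Nat.mod_lt _ hlp⟩ : Fin es.length)
          = ⟨q+1, hq1⟩ := Fin.ext (Nat.mod_eq_of_lt hq1)
      rw [hidx]
      exact List.isChain_iff_getElem.mp hchain q (by omega)
    · have hqq : q = es.length - 1 := by omega
      have hidx : (⟨(q+1) % es.length, Nat.mod_lt _ hlp⟩ : Fin es.length)
          = ⟨0, hlp⟩ := by
        apply Fin.ext
        show (q+1) % es.length = 0
        have h0 : q + 1 = es.length := by omega
        rw [h0, Nat.mod_self]
      rw [hidx]
      have hlast : es.getLast hne = es.get ⟨q, hq⟩ := by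
        rw [List.getLast_eq_getElem, List.get_eq_getElem]
        congr 1
        exact hqq.symm
      have hhead : es.head hne = es.get ⟨0, hlp⟩ := by
        cases es with
        | nil => simp at hne
        | cons a t => rfl
      rw [← hlast, ← hhead]
      exact hclosed
  have hadjG : ∀ q : ℕ, Fin.tail (G q) = Fin.init (G (q+1)) := by
    intro q
    have h1 := hadj (q % es.length) (Nat.mod_lt _ hlp)
    have hidx : (⟨(q % es.length + 1) % es.length, Nat.mod_lt _ hlp⟩ : Fin es.length)
        = ⟨(q+1) % es.length, Nat.mod_lt _ hlp⟩ := Fin.ext (Nat.mod_add_mod _ _ _)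
    rw [hidx] at h1
    exact h1
  have hkey : ∀ (j : ℕ) (hj : j ≤ M + 2), ∀ p : ℕ,
      G (p + j) ⟨0, by omega⟩ = G p ⟨j, by omega⟩ := by
    intro j
    induction j with
    | zero => intro _ p; rfl
    | succ j ih =>
      intro hj p
      have h1 : p + (j + 1) = (p + 1) + j := by omega
      have h2 := ih (by omega) (p + 1)
      have h5 := congrFun (hadjG p) (⟨j, by omega⟩ : Fin (M+2))
      have h6 : G p (Fin.succ ⟨j, by omega⟩) = G (p+1) (Fin.castSucc ⟨j, by omega⟩) := h5
      simp only [Fin.succ_mk, Fin.castSucc_mk] at h6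
      rw [h1, h2, ← h6]
  -- the universal cycle
  refine ⟨fun z => G z.val ⟨0, by omega⟩, ?_⟩
  have hGmod : ∀ a b : ℕ, a % es.length = b % es.length → G a = G b := by
    intro a b hab
    show (es.get ⟨a % es.length, Nat.mod_lt _ hlp⟩).1 = (es.get ⟨b % es.length, Nat.mod_lt _ hlp⟩).1
    congr 2
    exact Fin.ext hab
  have hFeq : ∀ i : ZMod S.card,
      (fun j : Fin (M+3) => G (i + (j.val : ZMod S.card)).val ⟨0, by omega⟩) = G i.val := by
    intro i
    funext j
    have hval : (i + (j.val : ZMod S.card)).val % es.length = (i.val + j.val) % es.length := by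
      rw [ZMod.val_add, ZMod.val_natCast, hlen]
      rw [Nat.mod_mod_of_dvd _ (dvd_refl _)]
      conv_lhs => rw [Nat.add_mod]
      conv_rhs => rw [Nat.add_mod]
      rw [Nat.mod_mod_of_dvd _ (dvd_refl _)]
    rw [hGmod _ _ hval]
    have hk := hkey j.val (by have := j.isLt; omega) i.val
    rw [hk]
  have hGval : ∀ i : ZMod S.card, G i.val = (es.get ⟨i.val, by rw [hlen]; exact ZMod.val_lt i⟩).1 := by
    intro i
    show (es.get ⟨i.val % es.length, Nat.mod_lt _ hlp⟩).1 = _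
    congr 2
    apply Fin.ext
    apply Nat.mod_eq_of_lt
    rw [hlen]
    exact ZMod.val_lt i
  refine ⟨?_, ?_, ?_⟩
  · intro i _
    show (fun j : Fin (M+3) => G (i + (j.val : ZMod S.card)).val ⟨0, by omega⟩)
      ∈ (S : Set (Fin (M+3) → Fin (M+3)))
    rw [hFeq i, hGval i, Finset.mem_coe, hmem]
    exact (es.get _).2
  · intro i _ i' _ h
    have h2 : G i.val = G i'.val := by
      rw [← hFeq i, ← hFeq i']
      exact h
    rw [hGval i, hGval i'] at h2
    have hsub : es.get ⟨i.val, by rw [hlen]; exact ZMod.val_lt i⟩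
        = es.get ⟨i'.val, by rw [hlen]; exact ZMod.val_lt i'⟩ := Subtype.ext h2
    rw [List.get_eq_getElem, List.get_eq_getElem] at hsub
    have h3 := (List.Nodup.getElem_inj_iff hnd).mp hsub
    exact ZMod.val_injective _ h3
  · intro w hw
    rw [Finset.mem_coe, hmem] at hw
    obtain ⟨⟨p, hp⟩, hget⟩ := List.mem_iff_get.mp (hall ⟨w, hw⟩)
    refine ⟨((p : ℕ) : ZMod S.card), Set.mem_univ _, ?_⟩
    show (fun j : Fin (M+3) => G (((p : ℕ) : ZMod S.card) + (j.val : ZMod S.card)).val ⟨0, by omega⟩) = w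
    rw [hFeq]
    have hpval : ((p : ℕ) : ZMod S.card).val = p := ZMod.val_cast_of_lt (by omega)
    rw [hpval]
    have : G p = (es.get ⟨p, hp⟩).1 := by
      show (es.get ⟨p % es.length, Nat.mod_lt _ hlp⟩).1 = _
      congr 2
      exact Fin.ext (Nat.mod_eq_of_lt hp)
    rw [this, hget]
end Euler2
end

section
/- Let n, q, k be positive integers and let A₁, …, A_q be nonempty pairwise disjoint sets whose union is Fin n. If k ≥ 2q, then there exists a universal cycle for the set of strong passwords of length k, i.e., words w : Fin k → Fin n such that for every block index i ∈ {1, …, q} there is some position j with w(j) ∈ A_i. -/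
namespace UCAux

/-- one legal step: drop the first letter, append a letter, staying in `S`. -/
def Step {n k : ℕ} (S : Finset (Fin k → Fin n)) (u v : Fin k → Fin n) : Prop :=
  u ∈ S ∧ v ∈ S ∧ ∀ (t : ℕ) (h : t + 1 < k), v ⟨t, by omega⟩ = u ⟨t + 1, h⟩

/-- a permutation of `S` is good if it is a shift-successor map. -/
def Good {n k : ℕ} (S : Finset (Fin k → Fin n)) (σ : Equiv.Perm {x // x ∈ S}) : Prop :=
  ∀ (x : {x // x ∈ S}) (t : ℕ) (h : t + 1 < k),
    (σ x).val ⟨t, by omega⟩ = x.val ⟨t + 1, h⟩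

lemma fin_strictMono_le {q k : ℕ} (f : Fin q → Fin k) (hf : StrictMono f) :
    ∀ s : Fin q, s.val ≤ (f s).val := by
  have H : ∀ m : ℕ, ∀ s : Fin q, s.val = m → m ≤ (f s).val := by
    intro m
    induction m with
    | zero => intro s _; exact Nat.zero_le _
    | succ t ih =>
      intro s hs
      have hs' : t < q := by omega
      have h1 : (⟨t, hs'⟩ : Fin q) < s := by simp [Fin.lt_def, hs]
      have h2 := Fin.lt_def.mp (hf h1)
      have h3 := ih ⟨t, hs'⟩ rfl
      omega
  intro s; exact H s.val s rfl

lemma cross {α : Type*} {r : α → α → Prop} {Q : α → Prop} {x y : α}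
    (hxy : Relation.ReflTransGen r x y) (hx : ¬ Q x) (hy : Q y) :
    ∃ u v, r u v ∧ ¬ Q u ∧ Q v := by
  revert hx
  induction hxy using Relation.ReflTransGen.head_induction_on with
  | refl => exact fun hx => absurd hy hx
  | @head a c hab hby ih =>
      intro hx
      by_cases hb : Q c
      · exact ⟨_, _, hab, hx, hb⟩
      · exact ih hb

lemma pow_mod_fix {α : Type*} (σ : Equiv.Perm α) (Z : α) (m : ℕ) (hm : 0 < m)
    (hfix : (σ ^ m) Z = Z) : ∀ t, (σ ^ t) Z = (σ ^ (t % m)) Z := by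
  intro t
  induction t using Nat.strong_induction_on with
  | _ t ih =>
    by_cases h : t < m
    · rw [Nat.mod_eq_of_lt h]
    · have h2 : t = (t - m) + m := by omega
      have h3 : (t - m) % m = t % m := by
        conv_rhs => rw [h2]
        rw [Nat.add_mod_right]
      have h4 : (σ ^ t) Z = (σ ^ (t - m)) Z := by
        conv_lhs => rw [h2]
        rw [pow_add, Equiv.Perm.mul_apply, hfix]
      rw [h4, ih (t - m) (by omega), h3]

lemma sameCycle_mul_swap {α : Type*} [Finite α] [DecidableEq α] (σ : Equiv.Perm α) (u y : α)
    (h : ¬ σ.SameCycle u y) :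
    ∀ a, σ.SameCycle y a → (σ * Equiv.swap u y).SameCycle u a := by
  set τ := σ * Equiv.swap u y with hτ
  have hτu : τ u = σ y := by simp [hτ, Equiv.Perm.mul_apply]
  have claim : ∀ i : ℕ, τ.SameCycle u ((σ ^ (i + 1)) y) := by
    intro i
    induction i with
    | zero =>
      simp only [zero_add, pow_one]
      rw [← hτu]
      exact ⟨1, by simp⟩
    | succ i ih =>
      by_cases hy : (σ ^ (i + 1)) y = y
      · have h2 : (σ ^ (i + 1 + 1)) y = σ y := by
          rw [pow_succ', Equiv.Perm.mul_apply, hy]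
        rw [h2, ← hτu]
        exact ⟨1, by simp⟩
      · have hu : (σ ^ (i + 1)) y ≠ u := by
          intro he
          exact h (Equiv.Perm.SameCycle.symm ⟨((i : ℤ) + 1), by exact_mod_cast he⟩)
        have h2 : τ ((σ ^ (i + 1)) y) = (σ ^ (i + 1 + 1)) y := by
          rw [hτ, Equiv.Perm.mul_apply, Equiv.swap_apply_of_ne_of_ne hu hy]
          simp [pow_succ', Equiv.Perm.mul_apply]
        rw [← h2]
        exact ih.apply_right
  intro a ha
  obtain ⟨i, -, hi⟩ := ha.exists_pow_eq'
  match i, hi with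
  | 0, hi =>
    have h0 : ((σ ^ (orderOf σ - 1 + 1)) y) = y := by
      have : orderOf σ - 1 + 1 = orderOf σ := by
        have := orderOf_pos σ
        omega
      rw [this, pow_orderOf_eq_one]; rfl
    simpa [← hi, h0] using claim (orderOf σ - 1)
  | (j+1), hi => simpa [hi] using claim j

lemma reach {n q k : ℕ} (hq : 1 ≤ q) (hk : 2 * q ≤ k)
    (A : Fin q → Finset (Fin n))
    (hdisj : ∀ i j, i ≠ j → Disjoint (A i) (A j))
    (a : Fin q → Fin n) (ha : ∀ i, a i ∈ A i)
    (S : Finset (Fin k → Fin n))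
    (hS : ∀ w, w ∈ S ↔ ∀ i : Fin q, ∃ j : Fin k, w j ∈ A i)
    (w : Fin k → Fin n) (hw : w ∈ S) :
    Relation.ReflTransGen (Step S) w
      (fun j : Fin k => a ⟨min j.val (q - 1), by omega⟩) := by
  classical
  have hk0 : 0 < k := by omega
  have hws := (hS w).mp hw
  -- last occurrence of each block
  set posset : Fin q → Finset (Fin k) := fun i => Finset.univ.filter (fun j => w j ∈ A i)
    with hposset
  have hne' : ∀ i, (posset i).Nonempty := by
    intro i; obtain ⟨j, hj⟩ := hws i; exact ⟨j, by simp [hposset, hj]⟩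
  set pos : Fin q → Fin k := fun i => (posset i).max' (hne' i) with hpos
  have hposmem : ∀ i, w (pos i) ∈ A i := fun i => by
    have := (posset i).max'_mem (hne' i); simpa [hposset] using this
  have hposinj : Function.Injective pos := by
    intro i i' hii
    by_contra hne2
    exact (Finset.disjoint_left.mp (hdisj i i' hne2)) (hposmem i) (hii ▸ hposmem i')
  set π := Tuple.sort pos with hπ
  have hmono : StrictMono (pos ∘ π) :=
    (Tuple.monotone_sort pos).strictMono_of_injective (hposinj.comp π.injective)
  have hple : ∀ s : Fin q, s.val ≤ (pos (π s)).val := fin_strictMono_le _ hmono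
  -- the stream
  set st : ℕ → Fin n := fun t =>
    if h : t < k then w ⟨t, h⟩
    else if h2 : t < k + q then a (π ⟨t - k, by omega⟩)
    else a ⟨min (t - k - q) (q - 1), by omega⟩ with hst
  set W : ℕ → Fin k → Fin n := fun T j => st (T + j.val) with hWdef
  have hstrong : ∀ T, T ≤ k + q → W T ∈ S := by
    intro T hT
    rw [hS]
    intro i
    by_cases hT2 : 2 * q ≤ T
    · -- the z-part covers block i
      refine ⟨⟨k + q + i.val - T, by omega⟩, ?_⟩
      have he : T + (k + q + i.val - T) = k + q + i.val := by omega
      have h3 : ¬ (k + q + i.val < k) := by omega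
      have h4 : ¬ (k + q + i.val < k + q) := by omega
      simp only [hWdef, he, hst, dif_neg h3, dif_neg h4]
      have hi : (⟨min (k + q + i.val - k - q) (q - 1), by omega⟩ : Fin q) = i := by
        apply Fin.ext
        simp only
        omega
      rw [hi]; exact ha i
    · -- T < 2q ≤ k
      have hTk : T < k := by omega
      set si := π.symm i with hsi
      by_cases hcase : si.val < T
      · -- already served: r-part
        refine ⟨⟨k + si.val - T, by omega⟩, ?_⟩
        have he : T + (k + si.val - T) = k + si.val := by omega
        have h3 : ¬ (k + si.val < k) := by omega
        have h4 : k + si.val < k + q := by omega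
        simp only [hWdef, he, hst, dif_neg h3, dif_pos h4]
        have hi : (⟨k + si.val - k, by omega⟩ : Fin q) = si := by
          apply Fin.ext; simp only; omega
        rw [hi, hsi, Equiv.apply_symm_apply]
        exact ha i
      · -- not yet served: last occurrence still ahead
        have hge : T ≤ (pos i).val := by
          have := hple si
          rw [hsi, Equiv.apply_symm_apply] at this
          omega
        refine ⟨⟨(pos i).val - T, by omega⟩, ?_⟩
        have he : T + ((pos i).val - T) = (pos i).val := by omega
        have h3 : (pos i).val < k := (pos i).isLt
        simp only [hWdef, he, hst, dif_pos h3]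
        have hi : (⟨(pos i).val, h3⟩ : Fin k) = pos i := Fin.ext rfl
        rw [hi]
        exact hposmem i
  have hstep : ∀ T, T < k + q → Step S (W T) (W (T + 1)) := by
    intro T hT
    refine ⟨hstrong T (by omega), hstrong (T + 1) (by omega), ?_⟩
    intro t h
    simp only [hWdef]
    congr 1
    omega
  have hchain : ∀ d, Relation.ReflTransGen (Step S) (W (k + q - d)) (W (k + q)) := by
    intro d
    induction d with
    | zero =>
      simp only [Nat.sub_zero]
      exact Relation.ReflTransGen.refl
    | succ e ih =>
      by_cases hle : e < k + q
      · have h5 : k + q - (e + 1) + 1 = k + q - e := by omega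
        refine Relation.ReflTransGen.head ?_ ih
        have := hstep (k + q - (e + 1)) (by omega)
        rwa [h5] at this
      · have h5 : k + q - (e + 1) = k + q - e := by omega
        rw [h5]; exact ih
  have hW0 : W 0 = w := by
    funext j
    simp only [hWdef, hst, Nat.zero_add, dif_pos j.isLt]
  have hWend : W (k + q) = (fun j : Fin k => a ⟨min j.val (q - 1), by omega⟩) := by
    funext j
    have h3 : ¬ (k + q + j.val < k) := by omega
    have h4 : ¬ (k + q + j.val < k + q) := by omega
    simp only [hWdef, hst, dif_neg h3, dif_neg h4]
    congr 1
    apply Fin.ext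
    simp only
    omega
  have := hchain (k + q)
  rw [Nat.sub_self, hW0, hWend] at this
  exact this

lemma good_swap {n k : ℕ} (S : Finset (Fin k → Fin n)) (σ : Equiv.Perm {x // x ∈ S})
    (hσ : Good S σ) (x y : {x // x ∈ S})
    (hxy : ∀ (t : ℕ) (h : t + 1 < k), x.val ⟨t + 1, h⟩ = y.val ⟨t + 1, h⟩) :
    Good S (σ * Equiv.swap x y) := by
  classical
  intro x' t h
  rcases eq_or_ne x' x with rfl | h1
  · rw [Equiv.Perm.mul_apply, Equiv.swap_apply_left, hσ y t h, hxy t h]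
  rcases eq_or_ne x' y with rfl | h2
  · rw [Equiv.Perm.mul_apply, Equiv.swap_apply_right, hσ x t h, hxy t h]
  · rw [Equiv.Perm.mul_apply, Equiv.swap_apply_of_ne_of_ne h1 h2, hσ x' t h]

lemma exists_good_rot {n q k : ℕ} (hk0 : 0 < k) (A : Fin q → Finset (Fin n))
    (S : Finset (Fin k → Fin n))
    (hS : ∀ w, w ∈ S ↔ ∀ i : Fin q, ∃ j : Fin k, w j ∈ A i) :
    ∃ σ : Equiv.Perm {x // x ∈ S}, Good S σ := by
  haveI : NeZero k := ⟨by omega⟩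
  have hmem : ∀ (x : {x // x ∈ S}), (fun j => x.val (j + 1)) ∈ S := by
    intro x
    rw [hS]
    intro i
    obtain ⟨j, hj⟩ := (hS _).mp x.2 i
    exact ⟨j - 1, by rwa [sub_add_cancel]⟩
  have hmem' : ∀ (x : {x // x ∈ S}), (fun j => x.val (j - 1)) ∈ S := by
    intro x
    rw [hS]
    intro i
    obtain ⟨j, hj⟩ := (hS _).mp x.2 i
    exact ⟨j + 1, by rwa [add_sub_cancel_right]⟩
  refine ⟨⟨fun x => ⟨fun j => x.val (j + 1), hmem x⟩,
          fun x => ⟨fun j => x.val (j - 1), hmem' x⟩, ?_, ?_⟩, ?_⟩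
  · intro x
    apply Subtype.ext
    funext j
    simp only [sub_add_cancel]
  · intro x
    apply Subtype.ext
    funext j
    simp only [add_sub_cancel_right]
  · intro x t h
    show x.val (⟨t, by omega⟩ + 1) = x.val ⟨t + 1, h⟩
    have harg : (⟨t, by omega⟩ : Fin k) + 1 = (⟨t + 1, h⟩ : Fin k) := by
      apply Fin.ext
      have hk2 : 1 < k := by omega
      rw [Fin.val_add, Fin.val_one', Nat.mod_eq_of_lt hk2]
      exact Nat.mod_eq_of_lt h
    rw [harg]

lemma good_word_eq {n k : ℕ} (hk0 : 0 < k) (S : Finset (Fin k → Fin n))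
    (σ : Equiv.Perm {x // x ∈ S}) (hσ : Good S σ) :
    ∀ (t : ℕ) (h : t < k) (x : {x // x ∈ S}),
      x.val ⟨t, h⟩ = ((σ ^ t) x).val ⟨0, hk0⟩ := by
  intro t
  induction t with
  | zero => intro h x; simp
  | succ t ih =>
    intro h x
    rw [← hσ x t h, ih (by omega) (σ x)]
    have hp : (σ ^ (t + 1)) x = (σ ^ t) (σ x) := by
      rw [pow_succ, Equiv.Perm.mul_apply]
    rw [hp]

lemma exists_good_cycle {n k : ℕ} (S : Finset (Fin k → Fin n)) (Z : {x // x ∈ S})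
    (hreach : ∀ x : {x // x ∈ S}, Relation.ReflTransGen (Step S) x.val Z.val)
    (σ0 : Equiv.Perm {x // x ∈ S}) (hσ0 : Good S σ0) :
    ∃ σ : Equiv.Perm {x // x ∈ S}, Good S σ ∧ ∀ x, σ.SameCycle Z x := by
  classical
  suffices H : ∀ (N : ℕ) (σ : Equiv.Perm {x // x ∈ S}), Good S σ →
      (Finset.univ.filter (fun x => ¬ σ.SameCycle Z x)).card ≤ N →
      ∃ σ' : Equiv.Perm {x // x ∈ S}, Good S σ' ∧ ∀ x, σ'.SameCycle Z x by
    exact H _ σ0 hσ0 le_rfl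
  intro N
  induction N with
  | zero =>
    intro σ hσ hcard
    refine ⟨σ, hσ, ?_⟩
    intro x
    by_contra hx
    have : x ∈ Finset.univ.filter (fun x => ¬ σ.SameCycle Z x) := by simp [hx]
    have := Finset.card_pos.mpr ⟨x, this⟩
    omega
  | succ N ihN =>
    intro σ hσ hcard
    by_cases hall : ∀ x, σ.SameCycle Z x
    · exact ⟨σ, hσ, hall⟩
    push_neg at hall
    obtain ⟨wbad, hwbad⟩ := hall
    -- find a crossing step
    set Q : (Fin k → Fin n) → Prop := fun v => ∃ hv : v ∈ S, σ.SameCycle Z ⟨v, hv⟩ with hQ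
    have hQw : ¬ Q wbad.val := by
      rintro ⟨hv, hc⟩
      exact hwbad (by convert hc)
    have hQZ : Q Z.val := ⟨Z.2, by rfl⟩
    obtain ⟨u, v, huv, hQu, hQv⟩ := cross (hreach wbad) hQw hQZ
    obtain ⟨hu, hv, hstep⟩ := huv
    obtain ⟨hv', hvc⟩ := hQv
    set U : {x // x ∈ S} := ⟨u, hu⟩ with hU
    set Y : {x // x ∈ S} := σ⁻¹ ⟨v, hv'⟩ with hY
    have hσY : σ Y = ⟨v, hv'⟩ := by rw [hY, Equiv.Perm.coe_inv, Equiv.apply_symm_apply]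
    have hYc : σ.SameCycle Z Y := hvc.trans ⟨-1, by simp [hY]⟩
    have hUc : ¬ σ.SameCycle Z U := by
      intro hc
      exact hQu ⟨hu, hc⟩
    have hsuf : ∀ (t : ℕ) (h : t + 1 < k), U.val ⟨t + 1, h⟩ = Y.val ⟨t + 1, h⟩ := by
      intro t h
      have h1 := hσ Y t h
      rw [hσY] at h1
      have h2 := hstep t h
      exact h2.symm.trans h1
    have hUY : ¬ σ.SameCycle U Y := fun hc => hUc (hYc.trans hc.symm)
    set τ := σ * Equiv.swap U Y with hτ
    have hτgood : Good S τ := good_swap S σ hσ U Y hsuf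
    have hkey : ∀ x, σ.SameCycle Y x → τ.SameCycle U x :=
      sameCycle_mul_swap σ U Y hUY
    have hpres : ∀ x, σ.SameCycle Z x → τ.SameCycle Z x := by
      intro x hx
      have h1 : τ.SameCycle U Z := hkey Z hYc.symm
      have h2 : τ.SameCycle U x := hkey x (hYc.symm.trans hx)
      exact h1.symm.trans h2
    have hnewU : τ.SameCycle Z U := (hkey Z hYc.symm).symm
    have hsub : Finset.univ.filter (fun x => ¬ τ.SameCycle Z x) ⊂
        Finset.univ.filter (fun x => ¬ σ.SameCycle Z x) := by
      constructor
      · intro x hx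
        simp only [Finset.mem_filter, Finset.mem_univ, true_and] at hx ⊢
        exact fun hc => hx (hpres x hc)
      · intro hsub2
        have hmem : U ∈ Finset.univ.filter (fun x => ¬ σ.SameCycle Z x) := by
          simp [hUc]
        have := hsub2 hmem
        simp only [Finset.mem_filter, Finset.mem_univ, true_and] at this
        exact this hnewU
    have := Finset.card_lt_card hsub
    exact ihN τ hτgood (by omega)

end UCAux

/-- Given a partition of the alphabet `Fin n` into `q` nonempty pairwise disjoint
blocks `A i`, U-cycles of strong passwords of length `k` (words containing at least
one letter from each block) exist whenever `k ≥ 2q`. -/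


theorem ucycle_strong_passwords (n q k : ℕ) (hn : 1 ≤ n) (hq : 1 ≤ q) (hk : 2 * q ≤ k)
    (A : Fin q → Finset (Fin n))
    (hne : ∀ i, (A i).Nonempty)
    (hdisj : ∀ i j, i ≠ j → Disjoint (A i) (A j))
    (hcov : ∀ x : Fin n, ∃ i, x ∈ A i) :
    HasUCycle (wordsOf (fun w : Fin k → Fin n =>
      ∀ i : Fin q, ∃ j : Fin k, w j ∈ A i)) := by
  classical
  have hk0 : 0 < k := by omega
  set S : Finset (Fin k → Fin n) :=
    wordsOf (fun w : Fin k → Fin n => ∀ i : Fin q, ∃ j : Fin k, w j ∈ A i) with hSdef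
  have hS : ∀ w, w ∈ S ↔ ∀ i : Fin q, ∃ j : Fin k, w j ∈ A i := by
    intro w; simp [hSdef, wordsOf]
  set a : Fin q → Fin n := fun i => (hne i).choose with hadef
  have ha : ∀ i, a i ∈ A i := fun i => (hne i).choose_spec
  set z : Fin k → Fin n := fun j => a ⟨min j.val (q - 1), by omega⟩ with hzdef
  have hz : z ∈ S := by
    rw [hS]
    intro i
    refine ⟨⟨i.val, by omega⟩, ?_⟩
    have he : (⟨min (i.val) (q - 1), by omega⟩ : Fin q) = i := by
      apply Fin.ext
      simp only
      omega
    show a ⟨min (i.val) (q - 1), by omega⟩ ∈ A i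
    rw [he]
    exact ha i
  set Z : {x // x ∈ S} := ⟨z, hz⟩ with hZdef
  have hreach : ∀ x : {x // x ∈ S},
      Relation.ReflTransGen (UCAux.Step S) x.val Z.val := by
    intro x
    exact UCAux.reach hq hk A hdisj a ha S hS x.val x.2
  obtain ⟨σ0, hσ0⟩ := UCAux.exists_good_rot hk0 A S hS
  obtain ⟨σ, hσ, hcyc⟩ := UCAux.exists_good_cycle S Z hreach σ0 hσ0
  -- minimal period of Z under σ
  set Ps : Set ℕ := {i | 0 < i ∧ (σ ^ i) Z = Z} with hPs
  have hPsne : Ps.Nonempty := ⟨orderOf σ, orderOf_pos σ, by rw [pow_orderOf_eq_one]; rfl⟩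
  set p := sInf Ps with hpdef
  have hpP : p ∈ Ps := Nat.sInf_mem hPsne
  have hp0 : 0 < p := hpP.1
  have hpfix : (σ ^ p) Z = Z := hpP.2
  have hinj : ∀ a b : ℕ, a < p → b < p → (σ ^ a) Z = (σ ^ b) Z → a = b := by
    have key : ∀ a b : ℕ, a < b → b < p → (σ ^ a) Z = (σ ^ b) Z → False := by
      intro a b hab hbp he
      have h1 : (σ ^ a) ((σ ^ (b - a)) Z) = (σ ^ a) Z := by
        rw [← Equiv.Perm.mul_apply, ← pow_add]
        have h5 : a + (b - a) = b := by omega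
        rw [h5]
        exact he.symm
      have h2 : (σ ^ (b - a)) Z = Z := (σ ^ a).injective h1
      have h6 : p ≤ b - a := Nat.sInf_le ⟨by omega, h2⟩
      omega
    intro a b hap hbp he
    rcases lt_trichotomy a b with h | h | h
    · exact (key a b h hbp he).elim
    · exact h
    · exact (key b a h hap he.symm).elim
  have hsurjp : ∀ x : {x // x ∈ S}, ∃ i, i < p ∧ (σ ^ i) Z = x := by
    intro x
    obtain ⟨i, -, hi⟩ := (hcyc x).exists_pow_eq'
    exact ⟨i % p, Nat.mod_lt _ hp0, by rw [← UCAux.pow_mod_fix σ Z p hp0 hpfix i, hi]⟩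
  have hcard : p = S.card := by
    rw [← Fintype.card_coe S]
    apply le_antisymm
    · have hinj2 : Function.Injective (fun i : Fin p => (σ ^ i.val) Z) := by
        intro i j he
        exact Fin.ext (hinj _ _ i.isLt j.isLt he)
      simpa using Fintype.card_le_of_injective _ hinj2
    · have hsurj2 : Function.Surjective (fun i : Fin p => (σ ^ i.val) Z) := by
        intro x
        obtain ⟨i, hip, hi⟩ := hsurjp x
        exact ⟨⟨i, hip⟩, hi⟩
      simpa using Fintype.card_le_of_surjective _ hsurj2
  have hm0 : 0 < S.card := by omega
  haveI : NeZero S.card := ⟨by omega⟩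
  have hmfix : (σ ^ S.card) Z = Z := by rw [← hcard]; exact hpfix
  refine ⟨fun i => ((σ ^ i.val) Z).val ⟨0, hk0⟩, ?_⟩
  have hwin : ∀ (i : ZMod S.card) (j : Fin k),
      ((σ ^ ((i + (j.val : ZMod S.card)).val)) Z).val ⟨0, hk0⟩ = ((σ ^ i.val) Z).val j := by
    intro i j
    rw [UCAux.good_word_eq hk0 S σ hσ j.val j.isLt ((σ ^ i.val) Z)]
    have h1 : (σ ^ j.val) ((σ ^ i.val) Z) = (σ ^ (j.val + i.val)) Z := by
      rw [pow_add, Equiv.Perm.mul_apply]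
    rw [h1, UCAux.pow_mod_fix σ Z S.card hm0 hmfix ((i + (j.val : ZMod S.card)).val),
        UCAux.pow_mod_fix σ Z S.card hm0 hmfix (j.val + i.val)]
    have h4 : (i + (j.val : ZMod S.card)).val % S.card = (j.val + i.val) % S.card := by
      rw [ZMod.val_add, ZMod.val_natCast, Nat.mod_mod_of_dvd _ dvd_rfl]
      have h5 : (i.val + j.val % S.card) % S.card = (i.val + j.val) % S.card :=
        Nat.ModEq.add_left _ (Nat.mod_modEq _ _)
      rw [h5, Nat.add_comm]
    rw [h4]
  have hwinf : ∀ i : ZMod S.card,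
      (fun j : Fin k => ((σ ^ ((i + (j.val : ZMod S.card)).val)) Z).val ⟨0, hk0⟩)
        = ((σ ^ i.val) Z).val := by
    intro i; funext j; exact hwin i j
  refine ⟨?_, ?_, ?_⟩
  · -- maps to
    intro i _
    show (fun j : Fin k => ((σ ^ ((i + (j.val : ZMod S.card)).val)) Z).val ⟨0, hk0⟩) ∈ ↑S
    rw [hwinf i]
    exact Finset.mem_coe.mpr ((σ ^ i.val) Z).2
  · -- inj on
    intro i _ i' _ he
    have he2 : ((σ ^ i.val) Z).val = ((σ ^ i'.val) Z).val := by
      rw [← hwinf i, ← hwinf i']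
      exact he
    have he3 : (σ ^ i.val) Z = (σ ^ i'.val) Z := Subtype.ext he2
    have := hinj i.val i'.val (by rw [hcard]; exact ZMod.val_lt i)
      (by rw [hcard]; exact ZMod.val_lt i') he3
    exact ZMod.val_injective _ this
  · -- surj on
    intro x hx
    have hxS : x ∈ S := hx
    obtain ⟨i, hip, hi⟩ := hsurjp ⟨x, hxS⟩
    refine ⟨(i : ZMod S.card), trivial, ?_⟩
    show (fun j : Fin k => ((σ ^ (((i : ZMod S.card) + (j.val : ZMod S.card)).val)) Z).val ⟨0, hk0⟩) = x
    rw [hwinf (i : ZMod S.card)]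
    have hv : ((i : ZMod S.card)).val = i := by
      rw [ZMod.val_natCast, Nat.mod_eq_of_lt (by omega)]
    rw [hv, hi]
end

section
/- For all integers k, s, t with 1 ≤ s < t ≤ k, there exists a universal cycle for the set of binary words w : Fin k → Fin 2 whose weight (number of positions carrying the letter 1) lies between s and t inclusive. -/
namespace UCProof

variable {ε V : Type*} [DecidableEq ε] [DecidableEq V] (src dst : ε → V)

/-- A closed trail in the multigraph whose edges are the elements of `E`. -/
structure IsClosedTrail (E : Finset ε) (C : List ε) : Prop where
  ne : C ≠ []
  nodup : C.Nodup
  sub : ∀ e ∈ C, e ∈ E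
  chain : List.Chain' (fun a b => dst a = src b) C
  wrap : ∀ a ∈ C.getLast?, ∀ b ∈ C.head?, dst a = src b

/-- One-step relation of the graph. -/
def GStep (E : Finset ε) (x y : V) : Prop := ∃ e ∈ E, src e = x ∧ dst e = y

abbrev GReach (E : Finset ε) : V → V → Prop := Relation.ReflTransGen (GStep src dst E)

lemma countP_eq_card_filter {C : List ε} (h : C.Nodup) (q : ε → Prop) [DecidablePred q] :
    C.countP (fun e => decide (q e)) = (C.toFinset.filter q).card := by
  induction C with
  | nil => simp
  | cons a C ih =>
    rw [List.nodup_cons] at h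
    rw [List.countP_cons, List.toFinset_cons, Finset.filter_insert]
    by_cases hq : q a
    · rw [if_pos hq, Finset.card_insert_of_notMem (by simp [h.1])]
      simp [hq, ih h.2]
    · rw [if_neg hq]
      simp [hq, ih h.2]

lemma trail_count (w : V) :
    ∀ (C : List ε) (a : ε), List.Chain' (fun a b => dst a = src b) (a :: C) →
      ((a :: C).countP (fun e => decide (src e = w)))
        + (if dst ((a :: C).getLast (by simp)) = w then 1 else 0)
      = ((a :: C).countP (fun e => decide (dst e = w)))
        + (if src a = w then 1 else 0) := by
  intro C
  induction C with
  | nil =>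
    intro a _
    simp only [List.countP_cons, List.countP_nil, List.getLast_singleton,
      decide_eq_true_eq]
    by_cases h1 : src a = w <;> by_cases h2 : dst a = w <;> simp [h1, h2]
  | cons b C ih =>
    intro a hc
    rw [List.Chain', List.isChain_cons_cons] at hc
    have hab : dst a = src b := hc.1
    have := ih b hc.2
    rw [List.countP_cons (p := fun e => decide (src e = w)) (a := a),
        List.countP_cons (p := fun e => decide (dst e = w)) (a := a)]
    have hgl : (a :: b :: C).getLast (by simp) = (b :: C).getLast (by simp) :=
      List.getLast_cons (by simp)
    rw [hgl]
    simp only [decide_eq_true_eq] at *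
    have hsd : (if src b = w then (1:ℕ) else 0) = (if dst a = w then 1 else 0) := by
      rw [hab]
    omega

lemma trail_length_le {E : Finset ε} {C : List ε} (h : C.Nodup) (hsub : ∀ e ∈ C, e ∈ E) :
    C.length ≤ E.card := by
  classical
  rw [← List.toFinset_card_of_nodup h]
  exact Finset.card_le_card (fun x hx => hsub x (List.mem_toFinset.mp hx))

lemma closed_of_saturated {E : Finset ε}
    (bal : ∀ v, (E.filter (fun e => src e = v)).card = (E.filter (fun e => dst e = v)).card)
    {C : List ε} (hne : C ≠ []) (hnd : C.Nodup) (hsub : ∀ e ∈ C, e ∈ E)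
    (hchain : List.Chain' (fun a b => dst a = src b) C)
    (hsat : ∀ e ∈ E, src e = dst (C.getLast hne) → e ∈ C) :
    IsClosedTrail src dst E C := by
  classical
  obtain ⟨a, C', rfl⟩ : ∃ a C', C = a :: C' := by
    cases C with
    | nil => exact absurd rfl hne
    | cons a C' => exact ⟨a, C', rfl⟩
  set w := dst ((a :: C').getLast (by simp)) with hw
  have hCsubT : (a :: C').toFinset ⊆ E := fun x hx => hsub x (List.mem_toFinset.mp hx)
  have h1 : (a :: C').countP (fun e => decide (src e = w)) = (E.filter (fun e => src e = w)).card := by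
    rw [countP_eq_card_filter hnd]
    refine le_antisymm (Finset.card_le_card (Finset.filter_subset_filter _ hCsubT)) ?_
    refine Finset.card_le_card (fun e he => ?_)
    rw [Finset.mem_filter] at he ⊢
    exact ⟨List.mem_toFinset.mpr (hsat e he.1 he.2), he.2⟩
  have h2 : (a :: C').countP (fun e => decide (dst e = w)) ≤ (E.filter (fun e => dst e = w)).card := by
    rw [countP_eq_card_filter hnd]
    exact Finset.card_le_card (Finset.filter_subset_filter _ hCsubT)
  have hcount := trail_count src dst w C' a hchain
  have hbal := bal w
  have hind : src a = w := by
    by_contra h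
    rw [if_neg h, if_pos hw.symm] at hcount
    omega
  refine ⟨hne, hnd, hsub, hchain, ?_⟩
  intro x hx y hy
  rw [List.getLast?_eq_getLast (by simp)] at hx
  have hx' : (a :: C').getLast (by simp) = x := Option.some_inj.mp hx
  have hy' : a = y := by simpa using hy
  rw [← hx', ← hy']
  rw [show dst ((a :: C').getLast (by simp)) = w from hw.symm, hind]

/-- In a balanced graph, from any edge one can grow a closed trail starting with it. -/
lemma exists_closed_trail (E : Finset ε)
    (bal : ∀ v, (E.filter (fun e => src e = v)).card = (E.filter (fun e => dst e = v)).card)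
    (e₀ : ε) (he₀ : e₀ ∈ E) :
    ∃ C, IsClosedTrail src dst E C ∧ C.head? = some e₀ := by
  classical
  suffices h : ∀ N (C : List ε), C ≠ [] → C.Nodup → (∀ e ∈ C, e ∈ E) →
      List.Chain' (fun a b => dst a = src b) C → C.head? = some e₀ →
      E.card - C.length ≤ N →
      ∃ C', IsClosedTrail src dst E C' ∧ C'.head? = some e₀ by
    refine h E.card [e₀] (by simp) (by simp) (by simpa) (by simp [List.Chain']) rfl (by simp)
  intro N
  induction N with
  | zero =>
    intro C hne hnd hsub hchain hhead hfuel
    by_cases hext : ∃ e ∈ E, e ∉ C ∧ src e = dst (C.getLast hne)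
    · obtain ⟨e, heE, heC, hesrc⟩ := hext
      have hnd' : (C ++ [e]).Nodup := by
        refine List.Nodup.append hnd (by simp) ?_
        intro x hx hx'
        simp at hx'
        exact heC (hx' ▸ hx)
      have hlen : (C ++ [e]).length ≤ E.card :=
        trail_length_le hnd' (by
          intro x hx
          rcases List.mem_append.mp hx with h | h
          · exact hsub x h
          · simp at h; exact h ▸ heE)
      simp at hlen
      omega
    · push_neg at hext
      exact ⟨C, closed_of_saturated src dst bal hne hnd hsub hchain
        (fun e he hs => by_contra fun hn => hext e he hn hs), hhead⟩
  | succ N ih =>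
    intro C hne hnd hsub hchain hhead hfuel
    by_cases hext : ∃ e ∈ E, e ∉ C ∧ src e = dst (C.getLast hne)
    · obtain ⟨e, heE, heC, hesrc⟩ := hext
      refine ih (C ++ [e]) (by simp) ?_ ?_ ?_ ?_ ?_
      · refine List.Nodup.append hnd (by simp) ?_
        intro x hx hx'
        simp at hx'
        exact heC (hx' ▸ hx)
      · intro x hx
        rcases List.mem_append.mp hx with h | h
        · exact hsub x h
        · simp at h; exact h ▸ heE
      · refine hchain.append (List.isChain_singleton e) ?_
        intro x hx y hy
        simp at hy
        rw [List.getLast?_eq_getLast hne] at hx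
        rw [← Option.some_inj.mp hx, ← hy]
        exact hesrc.symm
      · rw [List.head?_append_of_ne_nil _ hne]
        exact hhead
      · simp; omega
    · push_neg at hext
      exact ⟨C, closed_of_saturated src dst bal hne hnd hsub hchain
        (fun e he hs => by_contra fun hn => hext e he hn hs), hhead⟩

lemma closed_trail_rotate_one {E : Finset ε} {C : List ε} (h : IsClosedTrail src dst E C) :
    IsClosedTrail src dst E (C.rotate 1) := by
  obtain ⟨a, L, rfl⟩ : ∃ a L, C = a :: L := ⟨C.head h.ne, C.tail, (List.cons_head_tail h.ne).symm⟩
  cases L with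
  | nil => simpa using h
  | cons b L =>
    have hrot : (a :: b :: L).rotate 1 = (b :: L) ++ [a] := by
      rw [List.rotate_cons_succ, List.rotate_zero]
    rw [hrot]
    have hch := h.chain
    rw [List.Chain', List.isChain_cons_cons] at hch
    refine ⟨by simp, ?_, ?_, ?_, ?_⟩
    · exact (List.perm_append_singleton _ _).nodup_iff.mpr h.nodup
    · intro x hx
      rcases List.mem_append.mp hx with h' | h'
      · exact h.sub x (List.mem_cons_of_mem _ h')
      · simp at h'; exact h.sub x (h' ▸ List.mem_cons_self)
    · refine hch.2.append (List.isChain_singleton a) ?_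
      intro x hx y hy
      simp at hy
      rw [List.getLast?_eq_getLast (by simp)] at hx
      rw [← Option.some_inj.mp hx, ← hy]
      have := h.wrap ((a :: b :: L).getLast (by simp)) (List.getLast?_eq_getLast (by simp)) a rfl
      rw [List.getLast_cons (by simp)] at this
      exact this
    · intro x hx y hy
      rw [show b :: L ++ [a] = (b :: L) ++ [a] from rfl, List.getLast?_concat] at hx
      have hy' : b = y := by simpa using hy
      rw [← Option.some_inj.mp hx, ← hy']
      exact hch.1

lemma closed_trail_rotate {E : Finset ε} {C : List ε} (h : IsClosedTrail src dst E C) (n : ℕ) :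
    IsClosedTrail src dst E (C.rotate n) := by
  induction n with
  | zero => simpa using h
  | succ n ih =>
    have : C.rotate (n + 1) = (C.rotate n).rotate 1 := by
      rw [List.rotate_rotate]
    rw [this]
    exact closed_trail_rotate_one src dst ih

theorem euler_circuit (E : Finset ε) (hEne : E.Nonempty)
    (bal : ∀ v, (E.filter (fun e => src e = v)).card = (E.filter (fun e => dst e = v)).card)
    (conn : ∀ e ∈ E, ∀ e' ∈ E, GReach src dst E (dst e) (src e')) :
    ∃ C : List ε, IsClosedTrail src dst E C ∧ C.toFinset = E := by
  classical
  obtain ⟨e₀, he₀⟩ := hEne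
  obtain ⟨C₀, hC₀, -⟩ := exists_closed_trail src dst E bal e₀ he₀
  suffices h : ∀ N (C : List ε), IsClosedTrail src dst E C → E.card - C.length ≤ N →
      ∃ C', IsClosedTrail src dst E C' ∧ C'.toFinset = E from
    h E.card C₀ hC₀ (by omega)
  intro N
  induction N with
  | zero =>
    intro C hC hfuel
    refine ⟨C, hC, ?_⟩
    have h1 : C.toFinset ⊆ E := fun x hx => hC.sub x (List.mem_toFinset.mp hx)
    have h2 : C.toFinset.card = C.length := List.toFinset_card_of_nodup hC.nodup
    exact Finset.eq_of_subset_of_card_le h1 (by omega)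
  | succ N ih =>
    intro C hC hfuel
    by_cases hcov : E ⊆ C.toFinset
    · exact ⟨C, hC, Finset.Subset.antisymm
        (fun x hx => hC.sub x (List.mem_toFinset.mp hx)) hcov⟩
    have hfind : ∃ f ∈ E, f ∉ C ∧ ∃ g ∈ C, dst g = src f := by
      by_contra hno
      push_neg at hno
      obtain ⟨e', he'E, he'C⟩ := Finset.not_subset.mp hcov
      have he'C' : e' ∉ C := fun h => he'C (List.mem_toFinset.mpr h)
      have hhd : C.head hC.ne ∈ C := List.head_mem hC.ne
      have hreach := conn _ (hC.sub _ hhd) e' he'E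
      have key : ∀ x, Relation.ReflTransGen (GStep src dst E) (dst (C.head hC.ne)) x →
          ∃ g ∈ C, dst g = x := by
        intro x hx
        induction hx with
        | refl => exact ⟨_, hhd, rfl⟩
        | tail hab hstep ihh =>
          obtain ⟨g, hgC, hgdst⟩ := ihh
          obtain ⟨f, hfE, hfsrc, hfdst⟩ := hstep
          by_cases hfC : f ∈ C
          · exact ⟨f, hfC, hfdst⟩
          · exact absurd (hgdst.trans hfsrc.symm) (hno f hfE hfC g hgC)
      obtain ⟨g, hgC, hgdst⟩ := key _ hreach
      exact hno e' he'E he'C' g hgC hgdst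
    obtain ⟨f, hfE, hfC, g, hgC, hgf⟩ := hfind
    have hsubE : C.toFinset ⊆ E := fun x hx => hC.sub x (List.mem_toFinset.mp hx)
    -- counts along a closed trail are balanced
    have hCcount : ∀ v, (C.countP (fun e => decide (src e = v)))
        = (C.countP (fun e => decide (dst e = v))) := by
      intro v
      obtain ⟨a, C', hC'⟩ : ∃ a C', C = a :: C' :=
        ⟨C.head hC.ne, C.tail, (List.cons_head_tail hC.ne).symm⟩
      subst hC'
      have hcount := trail_count src dst v C' a hC.chain
      have hw : dst ((a :: C').getLast (by simp)) = src a :=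
        hC.wrap _ (List.getLast?_eq_getLast (by simp)) a rfl
      rw [hw] at hcount
      omega
    -- the complement is balanced
    set E' := E \ C.toFinset with hE'
    have hfilter : ∀ (q : ε → Prop) (_ : DecidablePred q),
        (E'.filter q).card = (E.filter q).card - C.countP (fun e => decide (q e)) := by
      intro q hq
      have h1 : E'.filter q = E.filter q \ C.toFinset.filter q := by
        ext x
        simp only [hE', Finset.mem_sdiff, Finset.mem_filter]
        tauto
      rw [h1, Finset.card_sdiff_of_subset (Finset.filter_subset_filter _ hsubE),
        countP_eq_card_filter hC.nodup]
    have bal' : ∀ v, (E'.filter (fun e => src e = v)).card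
        = (E'.filter (fun e => dst e = v)).card := by
      intro v
      rw [hfilter _ (fun e => inferInstance), hfilter _ (fun e => inferInstance),
        hCcount v, bal v]
    have hfE' : f ∈ E' := Finset.mem_sdiff.mpr ⟨hfE, fun h => hfC (List.mem_toFinset.mp h)⟩
    obtain ⟨D, hD, hDhead⟩ := exists_closed_trail src dst E' bal' f hfE'
    -- rotate C to end at g
    obtain ⟨A, B, hAB⟩ := List.append_of_mem hgC
    have hmle : A.length + 1 ≤ C.length := by rw [hAB]; simp
    have hrotC : C.rotate (A.length + 1) = B ++ (A ++ [g]) := by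
      have h1 : (A ++ [g]).length = A.length + 1 := by simp
      rw [List.rotate_eq_drop_append_take hmle, hAB,
        show A ++ g :: B = (A ++ [g]) ++ B by simp,
        List.drop_left' h1, List.take_left' h1]
    obtain ⟨rC, hrCdef⟩ : ∃ rC : List ε, B ++ (A ++ [g]) = rC := ⟨B ++ (A ++ [g]), rfl⟩
    rw [hrCdef] at hrotC
    have hrC : IsClosedTrail src dst E rC := hrotC ▸ closed_trail_rotate src dst hC (A.length + 1)
    have hrCperm : List.Perm rC C := hrotC ▸ List.rotate_perm C (A.length + 1)
    have hrClast : rC.getLast? = some g := by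
      rw [← hrCdef, show B ++ (A ++ [g]) = (B ++ A) ++ [g] by simp, List.getLast?_concat]
    -- splice
    refine ih (rC ++ D) ⟨by simp [hrC.ne], ?_, ?_, ?_, ?_⟩ ?_
    · refine List.Nodup.append hrC.nodup hD.nodup ?_
      intro x hx hx'
      have : x ∈ E' := hD.sub x hx'
      rw [hE', Finset.mem_sdiff] at this
      exact this.2 (List.mem_toFinset.mpr (hrCperm.mem_iff.mp hx))
    · intro x hx
      rcases List.mem_append.mp hx with h' | h'
      · exact hrC.sub x h'
      · exact Finset.mem_sdiff.mp (hD.sub x h') |>.1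
    · refine hrC.chain.append hD.chain ?_
      intro x hx y hy
      rw [hrClast] at hx
      rw [hDhead] at hy
      rw [← Option.some_inj.mp hx, ← Option.some_inj.mp hy]
      exact hgf
    · intro x hx y hy
      rw [List.getLast?_append_of_ne_nil _ hD.ne] at hx
      rw [List.head?_append_of_ne_nil _ hrC.ne] at hy
      have h1 : dst x = src f := by
        refine hD.wrap x hx f ?_
        rw [hDhead]; rfl
      have h2 : dst g = src y := by
        refine hrC.wrap g ?_ y hy
        rw [hrClast]; rfl
      rw [h1, ← hgf, h2]
    · have hlen : (rC ++ D).length ≤ E.card := by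
        refine trail_length_le ?_ ?_
        · refine List.Nodup.append hrC.nodup hD.nodup ?_
          intro x hx hx'
          have : x ∈ E' := hD.sub x hx'
          rw [hE', Finset.mem_sdiff] at this
          exact this.2 (List.mem_toFinset.mpr (hrCperm.mem_iff.mp hx))
        · intro x hx
          rcases List.mem_append.mp hx with h' | h'
          · exact hrC.sub x h'
          · exact Finset.mem_sdiff.mp (hD.sub x h') |>.1
      have hD1 : 1 ≤ D.length := by
        cases D with
        | nil => exact absurd rfl hD.ne
        | cons a l => simp
      have hrCl : rC.length = C.length := hrCperm.length_eq
      simp only [List.length_append]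
      omega

/-! ### Binary words and weights -/

/-- Weight of a binary list: its number of ones. -/
def wt (l : List (Fin 2)) : ℕ := l.count 1

@[simp] lemma wt_nil : wt ([] : List (Fin 2)) = 0 := rfl

lemma wt_append (l₁ l₂ : List (Fin 2)) : wt (l₁ ++ l₂) = wt l₁ + wt l₂ :=
  List.count_append

lemma wt_le_length (l : List (Fin 2)) : wt l ≤ l.length := List.count_le_length

lemma wt_take_add_wt_drop (l : List (Fin 2)) (j : ℕ) :
    wt (l.take j) + wt (l.drop j) = wt l := by
  rw [← wt_append, List.take_append_drop]

lemma wt_take_le (l : List (Fin 2)) (j : ℕ) : wt (l.take j) ≤ wt l := by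
  have := wt_take_add_wt_drop l j; omega

lemma wt_singleton (a : Fin 2) : wt [a] = a.val := by
  have : a = 0 ∨ a = 1 := by omega
  rcases this with h | h <;> subst h <;> rfl

lemma wt_cons (a : Fin 2) (l : List (Fin 2)) : wt (a :: l) = a.val + wt l := by
  rw [show a :: l = [a] ++ l from rfl, wt_append, wt_singleton]

lemma wt_take_succ (l : List (Fin 2)) (j : ℕ) (h : j < l.length) :
    wt (l.take (j + 1)) = wt (l.take j) + (l.get ⟨j, h⟩).val := by
  rw [List.take_succ, wt_append]
  congr 1
  rw [List.getElem?_eq_getElem h]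
  simpa using wt_singleton (l.get ⟨j, h⟩)

lemma wt_take_mono_succ (l : List (Fin 2)) (j : ℕ) :
    wt (l.take j) ≤ wt (l.take (j + 1)) ∧ wt (l.take (j + 1)) ≤ wt (l.take j) + 1 := by
  by_cases h : j < l.length
  · rw [wt_take_succ l j h]
    have : (l.get ⟨j, h⟩).val ≤ 1 := by omega
    omega
  · push_neg at h
    rw [List.take_of_length_le h, List.take_of_length_le (by omega)]
    omega

lemma wt_replicate_one (m : ℕ) : wt (List.replicate m 1) = m := by
  simp [wt]

lemma wt_replicate_zero (m : ℕ) : wt (List.replicate m 0) = 0 := by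
  simp [wt, List.count_replicate]

/-- The sorted string with `m` ones then `r` zeros. -/
def Zstr (m r : ℕ) : List (Fin 2) := List.replicate m 1 ++ List.replicate r 0

lemma wt_Zstr (m r : ℕ) : wt (Zstr m r) = m := by
  rw [Zstr, wt_append, wt_replicate_one, wt_replicate_zero]
  omega

lemma length_Zstr (m r : ℕ) : (Zstr m r).length = m + r := by simp [Zstr]

lemma wt_take_Zstr (m r j : ℕ) : wt ((Zstr m r).take j) = min j m := by
  rw [Zstr, List.take_append, wt_append, List.take_replicate,
    List.take_replicate, wt_replicate_one, wt_replicate_zero]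
  omega

lemma wt_drop_Zstr (m r j : ℕ) : wt ((Zstr m r).drop j) = m - j := by
  have h1 := wt_take_add_wt_drop (Zstr m r) j
  rw [wt_take_Zstr, wt_Zstr] at h1
  omega

/-! ### Words as functions and their lists -/

/-- Convert a list of the right length to a word. -/
def word {k : ℕ} (l : List (Fin 2)) (h : l.length = k) : Fin k → Fin 2 :=
  fun i => l.get (Fin.cast h.symm i)

lemma ofFn_word {k : ℕ} (l : List (Fin 2)) (h : l.length = k) :
    List.ofFn (word l h) = l := by
  refine List.ext_get (by simp [h]) ?_
  intro i h1 h2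
  simp [word, List.get_ofFn]

lemma ofFn_injective {k : ℕ} {f g : Fin k → Fin 2} (h : List.ofFn f = List.ofFn g) :
    f = g := by
  funext i
  have h1 : (List.ofFn f)[(i : ℕ)]'(by simp) = (List.ofFn g)[(i : ℕ)]'(by simp) := by
    simp only [h]
  simpa using h1


lemma cardFilter_eq_wt : ∀ {k : ℕ} (w : Fin k → Fin 2),
    (Finset.univ.filter fun i => w i = 1).card = wt (List.ofFn w) := by
  intro k
  induction k with
  | zero => intro w; simp [wt]
  | succ k ih =>
    intro w
    rw [List.ofFn_succ, wt_cons, Finset.card_filter, Fin.sum_univ_succ,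
      ← Finset.card_filter, ih (fun i => w i.succ)]
    congr 1
    have h01 : w 0 = 0 ∨ w 0 = 1 := by omega
    rcases h01 with h | h <;> rw [h] <;> simp

/-! ### The weight-range word graph -/

/-- Source vertex of a word: its length `k-1` prefix. -/
def esrc {k : ℕ} (e : Fin k → Fin 2) : List (Fin 2) := (List.ofFn e).dropLast

/-- Target vertex of a word: its length `k-1` suffix. -/
def edst {k : ℕ} (e : Fin k → Fin 2) : List (Fin 2) := (List.ofFn e).tail

section Graph

variable (k s t : ℕ)

/-- The set of binary words of length `k` with weight in `[s,t]`. -/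
noncomputable def WS : Finset (Fin k → Fin 2) :=
  wordsOf (fun w : Fin k → Fin 2 =>
    s ≤ (Finset.univ.filter fun i => w i = 1).card ∧
      (Finset.univ.filter fun i => w i = 1).card ≤ t)

variable {k s t}

lemma mem_WS (w : Fin k → Fin 2) :
    w ∈ WS k s t ↔ s ≤ wt (List.ofFn w) ∧ wt (List.ofFn w) ≤ t := by
  classical
  simp only [WS, wordsOf, Finset.mem_filter, Finset.mem_univ, true_and, cardFilter_eq_wt]

lemma step_of (hk : 2 ≤ k) {u : List (Fin 2)} (hu : u.length = k - 1) (a : Fin 2)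
    (h1 : s ≤ wt u + a.val) (h2 : wt u + a.val ≤ t) :
    GStep esrc edst (WS k s t) u (u.tail ++ [a]) := by
  have hne : u ≠ [] := by
    intro h; rw [h] at hu; simp at hu; omega
  have hlen : (u ++ [a]).length = k := by
    simp [hu]; omega
  refine ⟨word (u ++ [a]) hlen, ?_, ?_, ?_⟩
  · rw [mem_WS, ofFn_word, wt_append, wt_singleton]; exact ⟨h1, h2⟩
  · rw [esrc, ofFn_word, List.dropLast_concat]
  · rw [edst, ofFn_word, List.tail_append_of_ne_nil hne]

/-- Mutual reachability in the word graph. -/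
def Conn (k' s' t' : ℕ) (u v : List (Fin 2)) : Prop :=
  GReach esrc edst (WS k' s' t') u v ∧ GReach esrc edst (WS k' s' t') v u

lemma Conn.trans {u v w : List (Fin 2)} (h1 : Conn k s t u v) (h2 : Conn k s t v w) :
    Conn k s t u w :=
  ⟨h1.1.trans h2.1, h2.2.trans h1.2⟩

lemma Conn.symm {u v : List (Fin 2)} (h : Conn k s t u v) : Conn k s t v u := ⟨h.2, h.1⟩

lemma Conn.refl (u : List (Fin 2)) : Conn k s t u u :=
  ⟨Relation.ReflTransGen.refl, Relation.ReflTransGen.refl⟩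

/-- Data for one step along an interleaving schedule. -/
lemma state_succ {u c : List (Fin 2)} (hk : 2 ≤ k)
    (hu : u.length = k - 1) (hc : c.length = k - 1) {j : ℕ} (hj : j < k - 1) :
    ∃ hget : j < c.length,
    (u.drop j ++ c.take j).tail ++ [c.get ⟨j, hget⟩] = u.drop (j + 1) ++ c.take (j + 1) ∧
    wt (u.drop j ++ c.take j) + (c.get ⟨j, hget⟩).val
      = wt (u.drop j) + wt (c.take (j + 1)) ∧
    (u.drop j ++ c.take j).length = k - 1 := by
  have hget : j < c.length := by omega
  refine ⟨hget, ?_, ?_, ?_⟩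
  · have hne : u.drop j ≠ [] := by
      intro h
      have := congrArg List.length h
      simp [hu] at this
      omega
    rw [List.tail_append_of_ne_nil hne, List.tail_drop, List.take_succ,
      List.getElem?_eq_getElem hget, List.append_assoc]
    simp
  · rw [wt_append, wt_take_succ c j hget]
    omega
  · simp [hu]
    omega

lemma reach_of_schedule (hk : 2 ≤ k) {u c : List (Fin 2)}
    (hu : u.length = k - 1) (hc : c.length = k - 1)
    (hcond : ∀ j, j < k - 1 → s ≤ wt (u.drop j) + wt (c.take (j + 1)) ∧
      wt (u.drop j) + wt (c.take (j + 1)) ≤ t) :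
    GReach esrc edst (WS k s t) u c := by
  have key : ∀ d, d ≤ k - 1 →
      GReach esrc edst (WS k s t) (u.drop (k - 1 - d) ++ c.take (k - 1 - d)) c := by
    intro d
    induction d with
    | zero =>
      intro _
      have h1 : u.drop (k - 1 - 0) = [] := List.drop_eq_nil_of_le (by omega)
      have h2 : c.take (k - 1 - 0) = c := List.take_of_length_le (by omega)
      rw [h1, h2, List.nil_append]
    | succ d ih =>
      intro hd1
      have hj : k - 1 - (d + 1) < k - 1 := by omega
      obtain ⟨hget, heq, hwt, hlen⟩ := state_succ hk hu hc hj
      have hstep : GStep esrc edst (WS k s t)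
          (u.drop (k - 1 - (d + 1)) ++ c.take (k - 1 - (d + 1)))
          (u.drop (k - 1 - (d + 1) + 1) ++ c.take (k - 1 - (d + 1) + 1)) := by
        have h := step_of (s := s) (t := t) hk hlen (c.get ⟨k - 1 - (d + 1), hget⟩)
          (by rw [hwt]; exact (hcond _ hj).1) (by rw [hwt]; exact (hcond _ hj).2)
        rw [heq] at h
        exact h
      have harith : k - 1 - (d + 1) + 1 = k - 1 - d := by omega
      rw [harith] at hstep
      exact Relation.ReflTransGen.head hstep (ih (by omega))
  have := key (k - 1) le_rfl
  simpa using this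

lemma conn_move (hk : 2 ≤ k) {u : List (Fin 2)} (hu : u.length = k - 1) (a : Fin 2)
    (h1 : s ≤ wt u + a.val) (h2 : wt u + a.val ≤ t) :
    Conn k s t u (u.tail ++ [a]) := by
  have hne : u ≠ [] := by
    intro h; rw [h] at hu; simp at hu; omega
  constructor
  · exact Relation.ReflTransGen.single (step_of hk hu a h1 h2)
  · have hu' : (u.tail ++ [a]).length = k - 1 := by
      simp [List.length_tail, hu]
      omega
    refine reach_of_schedule hk hu' hu ?_
    intro j hj
    have hdrop : (u.tail ++ [a]).drop j = u.drop (j + 1) ++ [a] := by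
      rw [List.drop_append]
      have h0 : j - u.tail.length = 0 := by
        simp [List.length_tail, hu]; omega
      rw [h0, ← List.drop_one, List.drop_drop]
      simp [Nat.add_comm]
    rw [hdrop, wt_append, wt_singleton]
    have := wt_take_add_wt_drop u (j + 1)
    omega

lemma conn_schedule (hk : 2 ≤ k) {u c : List (Fin 2)}
    (hu : u.length = k - 1) (hc : c.length = k - 1)
    (hcond : ∀ j, j < k - 1 → s ≤ wt (u.drop j) + wt (c.take (j + 1)) ∧
      wt (u.drop j) + wt (c.take (j + 1)) ≤ t) :
    Conn k s t u c := by
  have key : ∀ d, d ≤ k - 1 → Conn k s t u (u.drop d ++ c.take d) := by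
    intro d
    induction d with
    | zero => intro _; simpa using Conn.refl u
    | succ d ih =>
      intro hd1
      have hj : d < k - 1 := by omega
      obtain ⟨hget, heq, hwt, hlen⟩ := state_succ hk hu hc hj
      refine (ih (by omega)).trans ?_
      have h := conn_move (s := s) (t := t) hk hlen (c.get ⟨d, hget⟩)
        (by rw [hwt]; exact (hcond _ hj).1) (by rw [hwt]; exact (hcond _ hj).2)
      rw [heq] at h
      exact h
  have := key (k - 1) le_rfl
  have h1 : u.drop (k - 1) = [] := List.drop_eq_nil_of_le (by omega)
  have h2 : c.take (k - 1) = c := List.take_of_length_le (by omega)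
  rw [h1, h2, List.nil_append] at this
  exact this

lemma conn_swap (hk : 2 ≤ k) (P Q : List (Fin 2))
    (hlen : (P ++ (0 : Fin 2) :: (1 : Fin 2) :: Q).length = k - 1)
    (hlow : s ≤ wt (P ++ (0 : Fin 2) :: (1 : Fin 2) :: Q))
    (hhigh : wt (P ++ (0 : Fin 2) :: (1 : Fin 2) :: Q) < t) :
    Conn k s t (P ++ (0 : Fin 2) :: (1 : Fin 2) :: Q)
      (P ++ (1 : Fin 2) :: (0 : Fin 2) :: Q) := by
  have hlc : (P ++ (1 : Fin 2) :: (0 : Fin 2) :: Q).length = k - 1 := by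
    simp only [List.length_append, List.length_cons] at hlen ⊢
    omega
  refine conn_schedule hk hlen hlc ?_
  intro j hj
  have htakele : ∀ (X : List (Fin 2)) (m : ℕ), m ≤ P.length →
      (P ++ X).take m = P.take m := by
    intro X m hm
    rw [List.take_append]
    have h0 : m - P.length = 0 := by omega
    rw [h0, List.take_zero, List.append_nil]
  have htakege : ∀ (X : List (Fin 2)) (m : ℕ),
      (P ++ X).take (P.length + m) = P ++ X.take m := by
    intro X m
    rw [List.take_append, List.take_of_length_le (by omega)]
    have h0 : P.length + m - P.length = m := by omega
    rw [h0]
  have key_low : wt ((P ++ (0:Fin 2) :: 1 :: Q).take (j+1))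
      ≤ wt ((P ++ (1:Fin 2) :: 0 :: Q).take (j+1)) := by
    rcases Nat.lt_or_ge j P.length with hc | hc
    · rw [htakele _ _ (by omega), htakele _ _ (by omega)]
    · obtain ⟨m, rfl⟩ : ∃ m, j = P.length + m := ⟨j - P.length, by omega⟩
      have e1 : P.length + m + 1 = P.length + (m + 1) := by omega
      rw [e1, htakege, htakege]
      rcases m with - | m
      · simp [wt_append, wt_cons] <;> omega
      · simp [wt_append, wt_cons] <;> omega
  have key_high : wt ((P ++ (1:Fin 2) :: 0 :: Q).take (j+1))
      ≤ wt ((P ++ (0:Fin 2) :: 1 :: Q).take j) + 1 := by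
    rcases Nat.lt_or_ge j P.length with hc | hc
    · rw [htakele _ _ (by omega), htakele _ _ (by omega)]
      have := wt_take_mono_succ P j
      omega
    · obtain ⟨m, rfl⟩ : ∃ m, j = P.length + m := ⟨j - P.length, by omega⟩
      have e1 : P.length + m + 1 = P.length + (m + 1) := by omega
      rw [e1, htakege, htakege]
      rcases m with - | m
      · simp [wt_append, wt_cons] <;> omega
      · rcases m with - | m
        · simp [wt_append, wt_cons] <;> omega
        · have hmm := wt_take_mono_succ Q m
          simp [wt_append, wt_cons] <;> omega
  have hsplit := wt_take_add_wt_drop (P ++ (0:Fin 2) :: 1 :: Q) j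
  have humono := wt_take_mono_succ (P ++ (0:Fin 2) :: 1 :: Q) j
  omega

/-! ### Sorting a word by adjacent swaps -/

/-- Binary value of a list, most significant bit first. -/
def bval (l : List (Fin 2)) : ℕ := l.foldl (fun acc b => 2 * acc + b.val) 0

lemma bval_aux : ∀ (l : List (Fin 2)) (a : ℕ),
    l.foldl (fun acc b => 2 * acc + b.val) a = a * 2 ^ l.length + bval l := by
  intro l
  induction l with
  | nil => intro a; simp [bval]
  | cons b l ih =>
    intro a
    have hcons : bval (b :: l) = b.val * 2 ^ l.length + bval l := by
      rw [bval, List.foldl_cons]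
      have := ih (2 * 0 + b.val)
      simpa using this
    rw [List.foldl_cons, ih, hcons, List.length_cons, pow_succ]
    ring

lemma bval_cons (b : Fin 2) (l : List (Fin 2)) :
    bval (b :: l) = b.val * 2 ^ l.length + bval l := by
  rw [bval, List.foldl_cons]
  have := bval_aux l (2 * 0 + b.val)
  simpa using this

lemma bval_lt (l : List (Fin 2)) : bval l < 2 ^ l.length := by
  induction l with
  | nil => simp [bval]
  | cons b l ih =>
    rw [bval_cons, List.length_cons, pow_succ]
    have : b.val ≤ 1 := by omega
    nlinarith

lemma bval_append (P M : List (Fin 2)) :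
    bval (P ++ M) = bval P * 2 ^ M.length + bval M := by
  rw [bval, List.foldl_append, ← bval, bval_aux]

lemma bval_swap_lt (P Q : List (Fin 2)) :
    bval (P ++ (0:Fin 2) :: 1 :: Q) < bval (P ++ (1:Fin 2) :: 0 :: Q) := by
  rw [bval_append, bval_append]
  have h1 : bval ((0:Fin 2) :: 1 :: Q) = 2 ^ Q.length + bval Q := by
    rw [bval_cons, bval_cons]
    simp
  have h2 : bval ((1:Fin 2) :: 0 :: Q) = 2 ^ (Q.length + 1) + bval Q := by
    rw [bval_cons, bval_cons]
    simp [List.length_cons]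
  have h3 : ((0:Fin 2) :: 1 :: Q).length = ((1:Fin 2) :: 0 :: Q).length := by simp
  rw [h1, h2, ← h3]
  have h4 : (2:ℕ) ^ Q.length < 2 ^ (Q.length + 1) := by
    rw [pow_succ]; have := pow_pos (show (0:ℕ) < 2 by norm_num) Q.length; omega
  omega

lemma sorted_of_no01 : ∀ (l : List (Fin 2)),
    (∀ P Q, l ≠ P ++ (0:Fin 2) :: (1:Fin 2) :: Q) →
    ∃ a b, l = List.replicate a 1 ++ List.replicate b 0 := by
  intro l
  induction l with
  | nil => intro _; exact ⟨0, 0, rfl⟩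
  | cons c rest ih =>
    intro h
    obtain ⟨a, b, hab⟩ := ih (fun P Q hPQ => h (c :: P) Q (by rw [hPQ]; rfl))
    have hc : c = 0 ∨ c = 1 := by omega
    rcases hc with rfl | rfl
    · rcases a with - | a
      · refine ⟨0, b + 1, ?_⟩
        rw [hab]
        simp [List.replicate_succ]
      · exact absurd (by rw [hab]; simp [List.replicate_succ] :
          (0:Fin 2) :: rest = [] ++ (0:Fin 2) :: 1 :: (List.replicate a 1 ++ List.replicate b 0))
          (h [] _)
    · refine ⟨a + 1, b, ?_⟩
      rw [hab]
      simp [List.replicate_succ]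

lemma conn_sort (hk : 2 ≤ k) :
    ∀ d (u : List (Fin 2)), u.length = k - 1 → s ≤ wt u → wt u < t →
    2 ^ (k - 1) ≤ bval u + d →
    Conn k s t u (Zstr (wt u) (k - 1 - wt u)) := by
  intro d
  induction d with
  | zero =>
    intro u hu _ _ hd
    have := bval_lt u
    rw [hu] at this
    omega
  | succ d ih =>
    intro u hu hl hh hd
    by_cases hex : ∃ P Q, u = P ++ (0:Fin 2) :: (1:Fin 2) :: Q
    · obtain ⟨P, Q, rfl⟩ := hex
      have hswap := conn_swap hk P Q hu hl hh
      have hwt : wt (P ++ (1:Fin 2) :: 0 :: Q) = wt (P ++ (0:Fin 2) :: 1 :: Q) := by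
        rw [wt_append, wt_append, wt_cons, wt_cons, wt_cons, wt_cons]
        omega
      have hlen2 : (P ++ (1:Fin 2) :: 0 :: Q).length = k - 1 := by
        simp only [List.length_append, List.length_cons] at hu ⊢
        omega
      have hbval := bval_swap_lt P Q
      have h2 := ih (P ++ (1:Fin 2) :: 0 :: Q) hlen2 (by omega) (by omega) (by omega)
      rw [hwt] at h2
      exact hswap.trans h2
    · push_neg at hex
      obtain ⟨a, b, hab⟩ := sorted_of_no01 u hex
      have hwtu : wt u = a := by
        rw [hab, wt_append, wt_replicate_one, wt_replicate_zero]
        omega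
      have hlen2 : a + b = k - 1 := by
        rw [hab] at hu
        simpa using hu
      have hZ : Zstr (wt u) (k - 1 - wt u) = u := by
        rw [hwtu, hab, Zstr, show k - 1 - a = b by omega]
      rw [hZ]
      exact Conn.refl u

/-! ### Moving between sorted words of different weights -/

lemma conn_slide (hk : 2 ≤ k) (m : ℕ) (hm1 : s ≤ m + 1) (hm2 : m + 1 ≤ t)
    (hmn : m + 1 ≤ k - 1) :
    Conn k s t (Zstr m (k - 1 - m)) (Zstr (m + 1) (k - 1 - (m + 1))) := by
  refine conn_schedule hk (by rw [length_Zstr]; omega) (by rw [length_Zstr]; omega) ?_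
  intro j hj
  rw [wt_drop_Zstr, wt_take_Zstr]
  omega

lemma conn_slide_up (hk : 2 ≤ k) :
    ∀ (δ m : ℕ), s ≤ m → m + δ ≤ t → m + δ ≤ k - 1 → 1 ≤ m →
    Conn k s t (Zstr m (k - 1 - m)) (Zstr (m + δ) (k - 1 - (m + δ))) := by
  intro δ
  induction δ with
  | zero => intro m _ _ _ _; exact Conn.refl _
  | succ δ ih =>
    intro m hm1 hm2 hm3 hm4
    refine (ih m hm1 (by omega) (by omega) hm4).trans ?_
    have := conn_slide (s := s) (t := t) hk (m + δ) (by omega) (by omega) (by omega)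
    rw [show m + δ + 1 = m + (δ + 1) by omega] at this
    exact this

lemma conn_sorted_pair (hk : 2 ≤ k) (m m' : ℕ) (h1 : s ≤ m) (h2 : m ≤ t) (h3 : m ≤ k - 1)
    (h1' : s ≤ m') (h2' : m' ≤ t) (h3' : m' ≤ k - 1) (hs1 : 1 ≤ s) :
    Conn k s t (Zstr m (k - 1 - m)) (Zstr m' (k - 1 - m')) := by
  rcases le_or_gt m m' with hmm | hmm
  · have := conn_slide_up (s := s) (t := t) hk (m' - m) m h1 (by omega) (by omega) (by omega)
    rw [show m + (m' - m) = m' by omega] at this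
    exact this
  · have := conn_slide_up (s := s) (t := t) hk (m - m') m' h1' (by omega) (by omega) (by omega)
    rw [show m' + (m - m') = m by omega] at this
    exact this.symm

/-! ### Weight normalization -/

lemma mem_zero_of_wt_lt {u : List (Fin 2)} (h : wt u < u.length) : (0 : Fin 2) ∈ u := by
  by_contra hmem
  have hall : ∀ b ∈ u, (1 : Fin 2) = b := by
    intro b hb
    have hb2 : b = 0 ∨ b = 1 := by omega
    rcases hb2 with rfl | rfl
    · exact absurd hb hmem
    · rfl
  have := List.count_eq_length.mpr hall
  have hwt : wt u = u.length := this
  omega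

lemma mem_one_of_wt_pos {u : List (Fin 2)} (h : 0 < wt u) : (1 : Fin 2) ∈ u :=
  List.count_pos_iff.mp h

lemma conn_raise (hk : 2 ≤ k) (hst : s < t) (htk : t ≤ k) :
    ∀ d (u : List (Fin 2)), u.length = k - 1 → wt u + 1 = s →
    List.idxOf (0 : Fin 2) u ≤ d →
    ∃ u', Conn k s t u u' ∧ u'.length = k - 1 ∧ wt u' = s := by
  intro d
  induction d with
  | zero =>
    intro u hu hwt hidx
    obtain ⟨h, rest, rfl⟩ : ∃ h rest, u = h :: rest := by
      cases u with
      | nil => simp at hu; omega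
      | cons h rest => exact ⟨h, rest, rfl⟩
    have hh : h = 0 ∨ h = 1 := by omega
    rcases hh with rfl | rfl
    · -- head is 0, single move
      refine ⟨rest ++ [1], ?_, ?_, ?_⟩
      · have := conn_move (s := s) (t := t) hk hu (1 : Fin 2)
          (by rw [Fin.val_one]; omega) (by rw [Fin.val_one]; omega)
        simpa using this
      · simp at hu ⊢; omega
      · rw [wt_append, wt_singleton, Fin.val_one]
        rw [wt_cons] at hwt
        simp at hwt
        omega
    · exfalso
      rw [List.idxOf_cons_ne _ (by decide)] at hidx
      omega
  | succ d ih =>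
    intro u hu hwt hidx
    obtain ⟨h, rest, rfl⟩ : ∃ h rest, u = h :: rest := by
      cases u with
      | nil => simp at hu; omega
      | cons h rest => exact ⟨h, rest, rfl⟩
    have hh : h = 0 ∨ h = 1 := by omega
    rcases hh with rfl | rfl
    · refine ⟨rest ++ [1], ?_, ?_, ?_⟩
      · have := conn_move (s := s) (t := t) hk hu (1 : Fin 2)
          (by rw [Fin.val_one]; omega) (by rw [Fin.val_one]; omega)
        simpa using this
      · simp at hu ⊢; omega
      · rw [wt_append, wt_singleton, Fin.val_one]
        rw [wt_cons] at hwt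
        simp at hwt
        omega
    · have hmove := conn_move (s := s) (t := t) hk hu (1 : Fin 2)
        (by rw [Fin.val_one]; omega) (by rw [Fin.val_one]; omega)
      have hwt1 : wt (rest ++ [1]) + 1 = s := by
        rw [wt_append, wt_singleton, Fin.val_one]
        rw [wt_cons] at hwt
        rw [Fin.val_one] at hwt
        omega
      have hlen1 : (rest ++ [1]).length = k - 1 := by
        simp at hu ⊢; omega
      have hmem : (0 : Fin 2) ∈ rest := by
        have hlt : wt (1 :: rest) < (1 :: rest).length := by
          rw [hu]; omega
        have := mem_zero_of_wt_lt hlt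
        simpa using this
      have hidx1 : List.idxOf (0 : Fin 2) (rest ++ [1]) ≤ d := by
        rw [List.idxOf_append_of_mem hmem]
        rw [List.idxOf_cons_ne _ (by decide)] at hidx
        omega
      obtain ⟨u', hc, hl, hw⟩ := ih (rest ++ [1]) hlen1 hwt1 hidx1
      exact ⟨u', (by simpa using hmove : Conn k s t (1 :: rest) (rest ++ [1])).trans hc, hl, hw⟩

lemma conn_lower (hk : 2 ≤ k) (hs1 : 1 ≤ s) (hst : s < t) :
    ∀ d (u : List (Fin 2)), u.length = k - 1 → wt u = t →
    List.idxOf (1 : Fin 2) u ≤ d →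
    ∃ u', Conn k s t u u' ∧ u'.length = k - 1 ∧ wt u' + 1 = t := by
  intro d
  induction d with
  | zero =>
    intro u hu hwt hidx
    obtain ⟨h, rest, rfl⟩ : ∃ h rest, u = h :: rest := by
      cases u with
      | nil => simp at hu; omega
      | cons h rest => exact ⟨h, rest, rfl⟩
    have hh : h = 0 ∨ h = 1 := by omega
    rcases hh with rfl | rfl
    · exfalso
      rw [List.idxOf_cons_ne _ (by decide)] at hidx
      omega
    · refine ⟨rest ++ [0], ?_, ?_, ?_⟩
      · have := conn_move (s := s) (t := t) hk hu (0 : Fin 2)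
          (by simp; omega) (by simp; omega)
        simpa using this
      · simp at hu ⊢; omega
      · rw [wt_append, wt_singleton]
        rw [wt_cons, Fin.val_one] at hwt
        simp
        omega
  | succ d ih =>
    intro u hu hwt hidx
    obtain ⟨h, rest, rfl⟩ : ∃ h rest, u = h :: rest := by
      cases u with
      | nil => simp at hu; omega
      | cons h rest => exact ⟨h, rest, rfl⟩
    have hh : h = 0 ∨ h = 1 := by omega
    rcases hh with rfl | rfl
    · have hmove := conn_move (s := s) (t := t) hk hu (0 : Fin 2)
        (by simp; omega) (by simp; omega)
      have hwt1 : wt (rest ++ [0]) = t := by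
        rw [wt_append, wt_singleton]
        rw [wt_cons] at hwt
        simp at hwt ⊢
        omega
      have hlen1 : (rest ++ [0]).length = k - 1 := by
        simp at hu ⊢; omega
      have hmem : (1 : Fin 2) ∈ rest := by
        have hpos : 0 < wt (0 :: rest) := by omega
        have := mem_one_of_wt_pos hpos
        rcases List.mem_cons.mp this with h' | h'
        · exact absurd h'.symm (by decide)
        · exact h'
      have hidx1 : List.idxOf (1 : Fin 2) (rest ++ [0]) ≤ d := by
        rw [List.idxOf_append_of_mem hmem]
        rw [List.idxOf_cons_ne _ (by decide)] at hidx
        omega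
      obtain ⟨u', hc, hl, hw⟩ := ih (rest ++ [0]) hlen1 hwt1 hidx1
      exact ⟨u', (by simpa using hmove : Conn k s t (0 :: rest) (rest ++ [0])).trans hc, hl, hw⟩
    · refine ⟨rest ++ [0], ?_, ?_, ?_⟩
      · have := conn_move (s := s) (t := t) hk hu (0 : Fin 2)
          (by simp; omega) (by simp; omega)
        simpa using this
      · simp at hu ⊢; omega
      · rw [wt_append, wt_singleton]
        rw [wt_cons, Fin.val_one] at hwt
        simp
        omega

lemma conn_normalize (hk : 2 ≤ k) (hs1 : 1 ≤ s) (hst : s < t) (htk : t ≤ k)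
    {u : List (Fin 2)} (hu : u.length = k - 1) (h1 : s ≤ wt u + 1) (h2 : wt u ≤ t) :
    ∃ u', Conn k s t u u' ∧ u'.length = k - 1 ∧ s ≤ wt u' ∧ wt u' < t := by
  by_cases hlow : wt u < s
  · obtain ⟨u', hc, hl, hw⟩ := conn_raise (s := s) (t := t) hk hst htk
      (List.idxOf (0 : Fin 2) u) u hu (by omega) le_rfl
    exact ⟨u', hc, hl, by omega, by omega⟩
  · by_cases hhigh : wt u = t
    · obtain ⟨u', hc, hl, hw⟩ := conn_lower (s := s) (t := t) hk hs1 hst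
        (List.idxOf (1 : Fin 2) u) u hu hhigh le_rfl
      exact ⟨u', hc, hl, by omega, by omega⟩
    · exact ⟨u, Conn.refl u, hu, by omega, by omega⟩

lemma conn_full (hk : 2 ≤ k) (hs1 : 1 ≤ s) (hst : s < t) (htk : t ≤ k)
    {u v : List (Fin 2)} (hu : u.length = k - 1) (hv : v.length = k - 1)
    (hu1 : s ≤ wt u + 1) (hu2 : wt u ≤ t) (hv1 : s ≤ wt v + 1) (hv2 : wt v ≤ t) :
    GReach esrc edst (WS k s t) u v := by
  obtain ⟨u', hcu, hlu, hsu, htu⟩ := conn_normalize hk hs1 hst htk hu hu1 hu2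
  obtain ⟨v', hcv, hlv, hsv, htv⟩ := conn_normalize hk hs1 hst htk hv hv1 hv2
  have h1 := conn_sort (s := s) (t := t) hk (2 ^ (k - 1)) u' hlu hsu htu (by omega)
  have h2 := conn_sort (s := s) (t := t) hk (2 ^ (k - 1)) v' hlv hsv htv (by omega)
  have h3 : Conn k s t (Zstr (wt u') (k - 1 - wt u')) (Zstr (wt v') (k - 1 - wt v')) := by
    refine conn_sorted_pair hk _ _ hsu (by omega) ?_ hsv (by omega) ?_ hs1
    · rw [← hlu]; exact wt_le_length u'
    · rw [← hlv]; exact wt_le_length v'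
  exact (hcu.trans ((h1.trans (h3.trans h2.symm)).trans hcv.symm)).1

/-! ### Instance facts: nonemptiness, balance, connectivity -/

lemma ofFn_ne_nil (hk : 1 ≤ k) (e : Fin k → Fin 2) : List.ofFn e ≠ [] := by
  intro h
  have := congrArg List.length h
  simp at this
  omega

lemma last_letter (hk : 1 ≤ k) (e : Fin k → Fin 2) :
    List.ofFn e = (List.ofFn e).dropLast ++ [e ⟨k - 1, by omega⟩] := by
  have hne := ofFn_ne_nil hk e
  have h1 := List.dropLast_append_getLast hne
  have h2 : (List.ofFn e).getLast hne = e ⟨k - 1, by omega⟩ := by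
    rw [List.getLast_eq_getElem]
    simp
  rw [h2] at h1
  exact h1.symm

lemma first_letter (hk : 1 ≤ k) (e : Fin k → Fin 2) :
    List.ofFn e = e ⟨0, by omega⟩ :: (List.ofFn e).tail := by
  have hne := ofFn_ne_nil hk e
  have h1 := List.cons_head_tail hne
  have h2 : (List.ofFn e).head hne = e ⟨0, by omega⟩ := by
    rw [List.head_eq_getElem_zero]
    simp
  rw [h2] at h1
  exact h1.symm

lemma ofFn_eq_of_src (hk : 1 ≤ k) {v : List (Fin 2)} {e : Fin k → Fin 2}
    (h : esrc e = v) : List.ofFn e = v ++ [e ⟨k - 1, by omega⟩] := by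
  have h1 := last_letter hk e
  rw [esrc] at h
  rw [h] at h1
  exact h1

lemma ofFn_eq_of_dst (hk : 1 ≤ k) {v : List (Fin 2)} {e : Fin k → Fin 2}
    (h : edst e = v) : List.ofFn e = e ⟨0, by omega⟩ :: v := by
  have h1 := first_letter hk e
  rw [edst] at h
  rw [h] at h1
  exact h1

lemma WS_nonempty (hs : 1 ≤ s) (hst : s < t) (htk : t ≤ k) : (WS k s t).Nonempty := by
  have hlen : (Zstr s (k - s)).length = k := by rw [length_Zstr]; omega
  exact ⟨word _ hlen, by rw [mem_WS, ofFn_word, wt_Zstr]; omega⟩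

lemma WS_balance (hk : 1 ≤ k) (v : List (Fin 2)) :
    ((WS k s t).filter (fun e => esrc e = v)).card
      = ((WS k s t).filter (fun e => edst e = v)).card := by
  classical
  by_cases hv : v.length = k - 1
  · have hvl : ∀ a : Fin 2, (v ++ [a]).length = k := by
      intro a; simp [hv]; omega
    have hvl' : ∀ a : Fin 2, (a :: v).length = k := by
      intro a; simp [hv]; omega
    have hsrc : ((WS k s t).filter (fun e => esrc e = v)).card
        = (Finset.univ.filter (fun a : Fin 2 => s ≤ wt v + a.val ∧ wt v + a.val ≤ t)).card := by
      refine Finset.card_bij' (fun e _ => e ⟨k - 1, by omega⟩)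
        (fun a _ => word (v ++ [a]) (hvl a)) ?_ ?_ ?_ ?_
      · intro e he
        rw [Finset.mem_filter] at he
        have hofn := ofFn_eq_of_src hk he.2
        have heW := he.1
        rw [mem_WS, hofn, wt_append, wt_singleton] at heW
        simp only [Finset.mem_filter, Finset.mem_univ, true_and]
        exact heW
      · intro a ha
        simp only [Finset.mem_filter, Finset.mem_univ, true_and] at ha
        rw [Finset.mem_filter]
        refine ⟨?_, ?_⟩
        · rw [mem_WS, ofFn_word, wt_append, wt_singleton]; exact ha
        · rw [esrc, ofFn_word, List.dropLast_concat]
      · intro e he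
        rw [Finset.mem_filter] at he
        apply ofFn_injective
        rw [ofFn_word]
        exact (ofFn_eq_of_src hk he.2).symm
      · intro a ha
        have h1 := last_letter hk (word (v ++ [a]) (hvl a))
        rw [ofFn_word, List.dropLast_concat] at h1
        have h2 := List.append_cancel_left h1
        exact (List.singleton_injective h2).symm
    have hdst : ((WS k s t).filter (fun e => edst e = v)).card
        = (Finset.univ.filter (fun a : Fin 2 => s ≤ wt v + a.val ∧ wt v + a.val ≤ t)).card := by
      refine Finset.card_bij' (fun e _ => e ⟨0, by omega⟩)
        (fun a _ => word (a :: v) (hvl' a)) ?_ ?_ ?_ ?_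
      · intro e he
        rw [Finset.mem_filter] at he
        have hofn := ofFn_eq_of_dst hk he.2
        have heW := he.1
        rw [mem_WS, hofn, wt_cons] at heW
        simp only [Finset.mem_filter, Finset.mem_univ, true_and]
        omega
      · intro a ha
        simp only [Finset.mem_filter, Finset.mem_univ, true_and] at ha
        rw [Finset.mem_filter]
        refine ⟨?_, ?_⟩
        · rw [mem_WS, ofFn_word, wt_cons]; omega
        · rw [edst, ofFn_word, List.tail_cons]
      · intro e he
        rw [Finset.mem_filter] at he
        apply ofFn_injective
        rw [ofFn_word]
        exact (ofFn_eq_of_dst hk he.2).symm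
      · intro a ha
        have h1 := first_letter hk (word (a :: v) (hvl' a))
        rw [ofFn_word] at h1
        have h2 : a = word (a :: v) (hvl' a) ⟨0, by omega⟩ := by
          have h3 := congrArg (fun l => List.head? l) h1
          simpa using h3
        exact h2.symm
    rw [hsrc, hdst]
  · have h1 : (WS k s t).filter (fun e => esrc e = v) = ∅ := by
      rw [Finset.filter_eq_empty_iff]
      intro e _ heq
      apply hv
      rw [← heq, esrc, List.length_dropLast, List.length_ofFn]
    have h2 : (WS k s t).filter (fun e => edst e = v) = ∅ := by
      rw [Finset.filter_eq_empty_iff]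
      intro e _ heq
      apply hv
      rw [← heq, edst, List.length_tail, List.length_ofFn]
    rw [h1, h2]

lemma WS_conn (hk : 2 ≤ k) (hs1 : 1 ≤ s) (hst : s < t) (htk : t ≤ k) :
    ∀ e ∈ WS k s t, ∀ e' ∈ WS k s t,
      GReach esrc edst (WS k s t) (edst e) (esrc e') := by
  intro e he e' he'
  rw [mem_WS] at he he'
  have hk1 : 1 ≤ k := by omega
  have h1 := congrArg wt (first_letter hk1 e)
  rw [wt_cons] at h1
  have h2 := congrArg wt (last_letter hk1 e')
  rw [wt_append, wt_singleton] at h2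
  have hv1 : (e ⟨0, by omega⟩).val ≤ 1 := by omega
  have hv2 : (e' ⟨k - 1, by omega⟩).val ≤ 1 := by omega
  apply conn_full hk hs1 hst htk
  · rw [edst, List.length_tail, List.length_ofFn]
  · rw [esrc, List.length_dropLast, List.length_ofFn]
  · rw [edst]; omega
  · rw [edst]; omega
  · rw [esrc]; omega
  · rw [esrc]; omega

end Graph

end UCProof

/-- For `1 ≤ s < t ≤ k`, U-cycles of binary words of length `k` whose weight (number
of ones) lies between `s` and `t` inclusive exist. -/
theorem ucycle_weight_range_binary_words (k s t : ℕ) (hs : 1 ≤ s) (hst : s < t)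
    (htk : t ≤ k) :
    HasUCycle (wordsOf (fun w : Fin k → Fin 2 =>
      s ≤ (Finset.univ.filter fun i => w i = 1).card ∧
        (Finset.univ.filter fun i => w i = 1).card ≤ t)) := by
  classical
  have hk2 : 2 ≤ k := by omega
  have hk0 : 0 < k := by omega
  show HasUCycle (UCProof.WS k s t)
  obtain ⟨C, hC, hCtf⟩ := UCProof.euler_circuit UCProof.esrc UCProof.edst (UCProof.WS k s t)
    (UCProof.WS_nonempty hs hst htk) (UCProof.WS_balance (by omega))
    (UCProof.WS_conn hk2 hs hst htk)
  set m := (UCProof.WS k s t).card with hm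
  have hlenC : C.length = m := by
    rw [hm, ← hCtf, List.toFinset_card_of_nodup hC.nodup]
  have hm1 : 0 < m := by
    rw [← hlenC]
    cases C with
    | nil => exact absurd rfl hC.ne
    | cons a l => simp
  haveI : NeZero m := ⟨by omega⟩
  have hvlt : ∀ i : ZMod m, i.val < C.length := by
    intro i; rw [hlenC]; exact ZMod.val_lt i
  set W : ZMod m → (Fin k → Fin 2) := fun i => C.get ⟨i.val, hvlt i⟩ with hW
  have hWmem : ∀ i : ZMod m, W i ∈ UCProof.WS k s t := by
    intro i
    rw [← hCtf]
    exact List.mem_toFinset.mpr (C.get_mem _)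
  -- the cyclic chain property
  have hchainZ : ∀ i : ZMod m, UCProof.edst (W i) = UCProof.esrc (W (i + 1)) := by
    intro i
    have hval : (i + 1).val = (i.val + 1) % m := by
      rw [ZMod.val_add, ZMod.val_one_eq_one_mod]
      conv_rhs => rw [Nat.add_mod]
      rw [Nat.mod_eq_of_lt (ZMod.val_lt i)]
    rcases Nat.lt_or_ge (i.val + 1) m with hx1 | hx1
    · have hv2 : (i + 1).val = i.val + 1 := by rw [hval, Nat.mod_eq_of_lt hx1]
      have hchain := List.isChain_iff_getElem.mp hC.chain i.val (show i.val + 1 < C.length by omega)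
      have hWe : W (i + 1) = C.get ⟨i.val + 1, by omega⟩ := by
        rw [hW]
        exact congrArg C.get (Fin.ext hv2)
      rw [hWe]
      exact hchain
    · have him : i.val + 1 = m := by
        have := ZMod.val_lt i
        omega
      have hv2 : (i + 1).val = 0 := by rw [hval, him, Nat.mod_self]
      have hwrap := hC.wrap (C.getLast hC.ne) (List.getLast?_eq_getLast hC.ne)
        (C.head hC.ne) (List.head?_eq_head _)
      have hgl : C.getLast hC.ne = C.get ⟨i.val, hvlt i⟩ := by
        rw [List.getLast_eq_getElem, List.get_eq_getElem]
        congr 1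
        simp only [Fin.val_mk]
        omega
      have hhd : C.head hC.ne = W (i + 1) := by
        have hre : W (i + 1) = C.get ⟨(i + 1).val, hvlt _⟩ := rfl
        rw [hre, List.head_eq_getElem_zero, List.get_eq_getElem]
        congr 1
        simp only [Fin.val_mk]
        omega
      rw [hgl, hhd] at hwrap
      exact hwrap
  -- pointwise letter relation
  have hpt : ∀ (i : ZMod m) (j : ℕ) (hj : j + 1 < k),
      W i ⟨j + 1, hj⟩ = W (i + 1) ⟨j, by omega⟩ := by
    intro i j hj
    have h := hchainZ i
    rw [UCProof.edst, UCProof.esrc] at h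
    have e1 := List.getElem_of_eq h (i := j)
      (by rw [List.length_tail, List.length_ofFn]; omega)
    rw [List.getElem_tail, List.getElem_dropLast] at e1
    simpa using e1
  -- iterated letter relation
  have hwin : ∀ (d : ℕ) (hd : d < k) (i : ZMod m),
      W i ⟨d, hd⟩ = W (i + (d : ZMod m)) ⟨0, hk0⟩ := by
    intro d
    induction d with
    | zero => intro hd i; simp
    | succ d ih =>
      intro hd i
      have h1 : W i ⟨d + 1, hd⟩ = W (i + 1) ⟨d, by omega⟩ := hpt i d hd
      rw [h1, ih (by omega) (i + 1)]
      congr 1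
      push_cast
      ring
  refine ⟨fun i => W i ⟨0, hk0⟩, ?_, ?_, ?_⟩
  · -- MapsTo
    intro i _
    have : (fun j : Fin k => W (i + (j.val : ZMod m)) ⟨0, hk0⟩) = W i := by
      funext j
      rw [← hwin j.val j.isLt i]
    rw [Finset.mem_coe]
    show (fun j : Fin k => W (i + (j.val : ZMod m)) ⟨0, hk0⟩) ∈ (UCProof.WS k s t : Finset _)
    rw [this]
    exact hWmem i
  · -- InjOn
    intro i1 _ i2 _ heq
    have h1 : (fun j : Fin k => W (i1 + (j.val : ZMod m)) ⟨0, hk0⟩) = W i1 := by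
      funext j; rw [← hwin j.val j.isLt i1]
    have h2 : (fun j : Fin k => W (i2 + (j.val : ZMod m)) ⟨0, hk0⟩) = W i2 := by
      funext j; rw [← hwin j.val j.isLt i2]
    have hWeq : W i1 = W i2 := by rw [← h1, ← h2]; exact heq
    have hfin : (⟨i1.val, hvlt i1⟩ : Fin C.length) = ⟨i2.val, hvlt i2⟩ :=
      (List.nodup_iff_injective_get.mp hC.nodup) hWeq
    exact ZMod.val_injective m (by simpa using congrArg Fin.val hfin)
  · -- SurjOn
    intro x hx
    have hx' : x ∈ C.toFinset := by rw [hCtf]; exact hx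
    obtain ⟨idx, hidx⟩ := List.mem_iff_get.mp (List.mem_toFinset.mp hx')
    refine ⟨(idx.val : ZMod m), Set.mem_univ _, ?_⟩
    have hvv : ((idx.val : ℕ) : ZMod m).val = idx.val := by
      rw [ZMod.val_natCast_of_lt]
      rw [← hlenC]
      exact idx.isLt
    have hWi : W ((idx.val : ℕ) : ZMod m) = x := by
      rw [hW, ← hidx]
      exact congrArg C.get (Fin.ext hvv)
    show (fun j : Fin k => W ((idx.val : ℕ) + (j.val : ZMod m) : ZMod m) ⟨0, hk0⟩) = x
    rw [← hWi]
    funext j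
    rw [← hwin j.val j.isLt _]
end
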